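/- arXiv:1901.09328 — 7 statements merged into one kernel-verified Lean document; each statement's English description precedes it below -/
import Mathlib

section
/- Let μ be a Borel probability measure supported on [0,1] such that μ({0}) = 0 or μ({1}) = 0. Then the integral periodic zero set Z(μ) = {ξ ∈ ℝ : μ̂(ξ + k) = 0 for all k ∈ ℤ} is empty. -/
open MeasureTheory Filter Topology

/-- Fourier transform of a Borel measure on `ℝ`: `μ̂(ξ) = ∫ e^{-2πiξx} dμ(x)`. -/
noncomputable def FT (μ : Measure ℝ) (ξ : ℝ) : ℂ :=
  ∫ x, Complex.exp (-(2 * (Real.pi : ℂ) * Complex.I) * (ξ : ℂ) * (x : ℂ)) ∂μ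

/-- The integral periodic zero set `Z(μ) = {ξ : μ̂(ξ + k) = 0 for all k ∈ ℤ}`. -/
def Zset (μ : Measure ℝ) : Set ℝ := {ξ : ℝ | ∀ k : ℤ, FT μ (ξ + (k : ℝ)) = 0}

/-- `ρ = (1/2)(δ₀ + δ₁)`. -/
noncomputable def rho : Measure ℝ :=
  (2 : ENNReal)⁻¹ • Measure.dirac (0 : ℝ) + (2 : ENNReal)⁻¹ • Measure.dirac (1 : ℝ)

/-- Weak convergence of a sequence of measures, tested against bounded continuous
functions. -/
def WeakLim (s : ℕ → Measure ℝ) (ν₀ : Measure ℝ) : Prop :=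
  ∀ f : BoundedContinuousFunction ℝ ℝ,
    Tendsto (fun n => ∫ x, f x ∂(s n)) atTop (𝓝 (∫ x, f x ∂ν₀))

open scoped Real ComplexConjugate

lemma key (μ : Measure ℝ) [IsProbabilityMeasure μ] (e : AddCircle (1:ℝ) → ℝ)
    (he : Measurable e) (hae : ∀ᵐ x ∂μ, e ((x : ℝ) : AddCircle (1:ℝ)) = x)
    (ξ : ℝ) (hk : ∀ k : ℤ, FT μ (ξ + (k : ℝ)) = 0) : False := by
  haveI : Fact ((0:ℝ) < 1) := ⟨one_pos⟩
  have hcont : Continuous (fun x : ℝ => ((x : ℝ) : AddCircle (1:ℝ))) := continuous_quotient_mk'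
  set ν : Measure (AddCircle (1:ℝ)) :=
    Measure.map (fun x : ℝ => ((x : ℝ) : AddCircle (1:ℝ))) μ with hν
  haveI : IsProbabilityMeasure ν :=
    Measure.isProbabilityMeasure_map hcont.measurable.aemeasurable
  set h : AddCircle (1:ℝ) → ℂ :=
    fun y => Complex.exp (((-(2 * π * (ξ * e y)) : ℝ) : ℂ) * Complex.I) with hh
  have hh_meas : Measurable h := by
    apply Measurable.cexp
    exact ((Complex.measurable_ofReal.comp ((he.const_mul ξ).const_mul (2 * π)).neg).mul_const _)
  have hnorm : ∀ y, ‖h y‖ = 1 := fun y => Complex.norm_exp_ofReal_mul_I _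
  -- Step 1 : all "Fourier coefficients" of h dν vanish
  have step1 : ∀ n : ℤ, ∫ y, (fourier n y) * h y ∂ν = 0 := by
    intro n
    rw [hν, integral_map hcont.measurable.aemeasurable (f := fun y => fourier n y * h y)
      (((map_continuous (fourier n)).measurable.mul hh_meas).aestronglyMeasurable)]
    rw [← hk (-n)]
    apply integral_congr_ae
    filter_upwards [hae] with x hx
    rw [hh]
    dsimp only
    rw [hx, fourier_coe_apply, ← Complex.exp_add]
    congr 1
    push_cast
    field_simp
    ring
  -- integrability of f * h for f ∈ L¹
  have hint : ∀ f : Lp ℂ 1 ν, Integrable (fun y => (f : AddCircle (1:ℝ) → ℂ) y * h y) ν := by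
    intro f
    have := (L1.integrable_coeFn f).bdd_mul hh_meas.aestronglyMeasurable
      (c := 1) (ae_of_all _ fun y => le_of_eq (hnorm y))
    simpa [mul_comm] using this
  -- the continuous linear functional f ↦ ∫ f h dν on L¹
  let T₀ : Lp ℂ 1 ν →ₗ[ℂ] ℂ :=
    { toFun := fun f => ∫ y, (f : AddCircle (1:ℝ) → ℂ) y * h y ∂ν
      map_add' := by
        intro f g
        have h1 : ∫ y, ((f + g : Lp ℂ 1 ν) : AddCircle (1:ℝ) → ℂ) y * h y ∂ν
            = ∫ y, ((f : AddCircle (1:ℝ) → ℂ) y * h y + (g : AddCircle (1:ℝ) → ℂ) y * h y) ∂ν := by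
          apply integral_congr_ae
          filter_upwards [Lp.coeFn_add f g] with y hy
          rw [hy, Pi.add_apply]; ring
        rw [h1, integral_add (hint f) (hint g)]
      map_smul' := by
        intro c f
        have h1 : ∫ y, ((c • f : Lp ℂ 1 ν) : AddCircle (1:ℝ) → ℂ) y * h y ∂ν
            = ∫ y, c • ((f : AddCircle (1:ℝ) → ℂ) y * h y) ∂ν := by
          apply integral_congr_ae
          filter_upwards [Lp.coeFn_smul c f] with y hy
          rw [hy, Pi.smul_apply, smul_eq_mul, smul_eq_mul]; ring
        dsimp only [RingHom.id_apply]
        rw [h1, integral_smul] }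
  have hbound : ∀ f : Lp ℂ 1 ν, ‖T₀ f‖ ≤ 1 * ‖f‖ := by
    intro f
    rw [one_mul]
    calc ‖∫ y, (f : AddCircle (1:ℝ) → ℂ) y * h y ∂ν‖
        ≤ ∫ y, ‖(f : AddCircle (1:ℝ) → ℂ) y * h y‖ ∂ν := norm_integral_le_integral_norm _
      _ = ∫ y, ‖(f : AddCircle (1:ℝ) → ℂ) y‖ ∂ν := by
          congr 1; funext y; rw [norm_mul, hnorm, mul_one]
      _ = ‖f‖ := (L1.norm_eq_integral_norm f).symm
  let T : Lp ℂ 1 ν →L[ℂ] ℂ := T₀.mkContinuous 1 hbound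
  have hTapp : ∀ f : Lp ℂ 1 ν, T f = ∫ y, (f : AddCircle (1:ℝ) → ℂ) y * h y ∂ν :=
    fun f => rfl
  -- T vanishes on continuous functions
  have hT0 : ∀ f : C(AddCircle (1:ℝ), ℂ), T (ContinuousMap.toLp 1 ν ℂ f) = 0 := by
    set S : C(AddCircle (1:ℝ), ℂ) →L[ℂ] ℂ := T.comp (ContinuousMap.toLp 1 ν ℂ) with hS
    have hfour : ∀ n : ℤ, S (fourier n) = 0 := by
      intro n
      have heq : S (fourier n) = ∫ y, (fourier n y) * h y ∂ν := by
        rw [hS, ContinuousLinearMap.comp_apply, hTapp]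
        apply integral_congr_ae
        filter_upwards [ContinuousMap.coeFn_toLp (p := (1:ENNReal)) ν (𝕜 := ℂ) (fourier n)] with y hy
        rw [hy]
      rw [heq, step1 n]
    have hspan : Submodule.span ℂ (Set.range (fourier (T := (1:ℝ)))) ≤ LinearMap.ker S :=
      Submodule.span_le.2 (by rintro _ ⟨n, rfl⟩; exact hfour n)
    have hle : (Submodule.span ℂ (Set.range (fourier (T := (1:ℝ))))).topologicalClosure
        ≤ LinearMap.ker S :=
      Submodule.topologicalClosure_minimal _ hspan (by exact ContinuousLinearMap.isClosed_ker S)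
    rw [span_fourier_closure_eq_top] at hle
    intro f
    have : S f = 0 := hle Submodule.mem_top
    simpa [hS] using this
  -- T vanishes everywhere
  have hTzero : ∀ f : Lp ℂ 1 ν, T f = 0 := by
    intro f
    refine DenseRange.induction_on
      (ContinuousMap.toLp_denseRange ℂ ν ℂ (p := 1) ENNReal.one_ne_top) f
      (isClosed_eq T.continuous continuous_const) hT0
  -- contradiction with f = conj h
  have hg : MemLp (fun y => conj (h y)) 1 ν :=
    MemLp.of_bound ((Complex.continuous_conj.measurable.comp hh_meas).aestronglyMeasurable)
      1 (ae_of_all _ fun y => by rw [RCLike.norm_conj, hnorm])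
  have hzero := hTzero (hg.toLp _)
  have hval : T (hg.toLp _) = 1 := by
    rw [hTapp]
    have hcongr : ∫ y, ((hg.toLp _ : Lp ℂ 1 ν) : AddCircle (1:ℝ) → ℂ) y * h y ∂ν
        = ∫ y, conj (h y) * h y ∂ν := by
      apply integral_congr_ae
      filter_upwards [hg.coeFn_toLp] with y hy
      rw [hy]
    rw [hcongr]
    have hone : ∀ y, conj (h y) * h y = 1 := by
      intro y
      rw [Complex.conj_mul']
      norm_cast
      rw [hnorm]
      norm_num
    simp only [hone]
    simp
  rw [hzero] at hval
  exact one_ne_zero hval.symm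

/-- If `μ` is a probability measure on `[0,1]` with `μ({0}) = 0` or `μ({1}) = 0`,
then its integral periodic zero set is empty. -/
theorem stmt1 (μ : Measure ℝ) [IsProbabilityMeasure μ]
    (hsupp : μ (Set.Icc (0 : ℝ) 1)ᶜ = 0)
    (h : μ {0} = 0 ∨ μ {1} = 0) : Zset μ = ∅ := by
  haveI : Fact ((0:ℝ) < 1) := ⟨one_pos⟩
  rw [Set.eq_empty_iff_forall_notMem]
  intro ξ hξ
  rcases h with h0 | h1
  · -- use representatives in (0, 1]
    refine key μ (fun y => ((AddCircle.equivIoc 1 0 y : Set.Ioc (0:ℝ) (0+1)) : ℝ)) ?_ ?_ ξ hξ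
    · exact measurable_subtype_coe.comp (AddCircle.measurableEquivIoc 1 0).measurable
    · have hnull : μ (Set.Ioc (0:ℝ) (0+1))ᶜ = 0 := by
        refine measure_mono_null ?_ (measure_union_null hsupp h0)
        intro x hx
        simp only [Set.mem_compl_iff, Set.mem_Ioc, not_and_or, not_lt, not_le] at hx
        by_cases hmem : x ∈ Set.Icc (0:ℝ) 1
        · right
          obtain ⟨hx0, hx1⟩ := hmem
          rcases hx with hx | hx
          · exact le_antisymm hx hx0
          · exfalso; linarith
        · exact Or.inl hmem
      have hmem : ∀ᵐ x ∂μ, x ∈ Set.Ioc (0:ℝ) (0+1) := by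
        rw [ae_iff]
        exact hnull
      filter_upwards [hmem] with x hx
      have h2 : (AddCircle.equivIoc 1 0) ((x : ℝ) : AddCircle (1:ℝ)) = ⟨x, hx⟩ := by
        rw [Equiv.apply_eq_iff_eq_symm_apply]; rfl
      rw [h2]
  · -- use representatives in [0, 1)
    refine key μ (fun y => ((AddCircle.equivIco 1 0 y : Set.Ico (0:ℝ) (0+1)) : ℝ)) ?_ ?_ ξ hξ
    · exact measurable_subtype_coe.comp (AddCircle.measurableEquivIco 1 0).measurable
    · have hnull : μ (Set.Ico (0:ℝ) (0+1))ᶜ = 0 := by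
        refine measure_mono_null ?_ (measure_union_null hsupp h1)
        intro x hx
        simp only [Set.mem_compl_iff, Set.mem_Ico, not_and_or, not_lt, not_le] at hx
        by_cases hmem : x ∈ Set.Icc (0:ℝ) 1
        · right
          obtain ⟨hx0, hx1⟩ := hmem
          rcases hx with hx | hx
          · exfalso; linarith
          · exact le_antisymm hx1 (by linarith)
        · exact Or.inl hmem
      have hmem : ∀ᵐ x ∂μ, x ∈ Set.Ico (0:ℝ) (0+1) := by
        rw [ae_iff]
        exact hnull
      filter_upwards [hmem] with x hx
      have h2 : (AddCircle.equivIco 1 0) ((x : ℝ) : AddCircle (1:ℝ)) = ⟨x, hx⟩ := by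
        rw [Equiv.apply_eq_iff_eq_symm_apply]; rfl
      rw [h2]
end

section
/- Let μ be a Borel probability measure supported on [0,1]. Then the integral periodic zero set Z(μ) is nonempty if and only if μ = ρ = (1/2)(δ₀ + δ₁), the equal-weighted sum of Dirac masses at 0 and 1. -/
open MeasureTheory Filter Topology

/- ### Auxiliary lemmas -/

lemma integrable_dirac' {f : ℝ → ℂ} (a : ℝ) : Integrable f (Measure.dirac a) :=
  (integrable_const (f a)).congr (ae_eq_dirac f).symm

lemma FT_smul_dirac_add (a b : ℝ) (c d : ENNReal) (hc : c ≠ ⊤) (hd : d ≠ ⊤) (ξ : ℝ) :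
    FT (c • Measure.dirac a + d • Measure.dirac b) ξ =
      c.toReal • Complex.exp (-(2 * (Real.pi : ℂ) * Complex.I) * ξ * a)
      + d.toReal • Complex.exp (-(2 * (Real.pi : ℂ) * Complex.I) * ξ * b) := by
  unfold FT
  rw [integral_add_measure ((integrable_dirac' a).smul_measure hc)
      ((integrable_dirac' b).smul_measure hd),
    integral_smul_measure, integral_smul_measure, integral_dirac, integral_dirac]

lemma FT_rho (ξ : ℝ) :
    FT rho ξ = (1 + Complex.exp (-(2 * (Real.pi : ℂ) * Complex.I) * ξ)) / 2 := by
  unfold rho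
  rw [FT_smul_dirac_add _ _ _ _ (by simp) (by simp)]
  simp
  ring

lemma FT_rho_half (k : ℤ) : FT rho ((1:ℝ)/2 + (k:ℝ)) = 0 := by
  rw [FT_rho]
  have : -(2 * (Real.pi : ℂ) * Complex.I) * (((1:ℝ)/2 + (k:ℝ) : ℝ) : ℂ) =
      (-Real.pi) * Complex.I + ((-k : ℤ) : ℂ) * (2 * Real.pi * Complex.I) := by
    push_cast; ring
  rw [this, Complex.exp_add, Complex.exp_int_mul_two_pi_mul_I]
  simp [Complex.exp_neg, Complex.exp_pi_mul_I]

lemma integrable_of_bdd (μ : Measure ℝ) [IsFiniteMeasure μ] {f : ℝ → ℂ}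
    (hc : Continuous f) {C : ℝ} (hb : ∀ x, ‖f x‖ ≤ C) : Integrable f μ :=
  ⟨hc.aestronglyMeasurable, HasFiniteIntegral.of_bounded (C := C) (ae_of_all _ hb)⟩

/-- Key step: if all integer translates of `ξ` are zeros of `μ̂`, then the twisted
integral of any continuous function on the circle vanishes. -/
lemma key_s2 (μ : Measure ℝ) [IsProbabilityMeasure μ] (ξ : ℝ)
    (h : ∀ k : ℤ, FT μ (ξ + (k : ℝ)) = 0) (f : C(AddCircle (1:ℝ), ℂ)) :
    ∫ x, Complex.exp (-(2 * (Real.pi : ℂ) * Complex.I) * ξ * x) * f (x : ℝ) ∂μ = 0 := by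
  haveI : Fact ((0:ℝ) < 1) := ⟨one_pos⟩
  set e : ℝ → ℂ := fun x => Complex.exp (-(2 * (Real.pi : ℂ) * Complex.I) * ξ * x) with he
  have hnorme : ∀ x : ℝ, ‖e x‖ = 1 := by
    intro x
    have hx : e x = Complex.exp (((-(2*Real.pi*ξ*x) : ℝ) : ℂ) * Complex.I) := by
      rw [he]; push_cast; ring_nf
    rw [hx]
    exact Complex.norm_exp_ofReal_mul_I _
  have hint : ∀ g : C(AddCircle (1:ℝ), ℂ), Integrable (fun x : ℝ => e x * g (x : ℝ)) μ := by
    intro g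
    apply integrable_of_bdd μ
    · exact (Complex.continuous_exp.comp (by fun_prop)).mul
        (g.continuous.comp (AddCircle.continuous_mk' 1))
    · intro x
      rw [norm_mul, hnorme, one_mul]
      exact g.norm_coe_le_norm _
  let L₀ : C(AddCircle (1:ℝ), ℂ) →ₗ[ℂ] ℂ :=
    { toFun := fun g => ∫ x, e x * g (x : ℝ) ∂μ
      map_add' := by
        intro g₁ g₂
        simp only [ContinuousMap.add_apply]
        rw [← integral_add (hint g₁) (hint g₂)]
        congr 1; ext x; ring
      map_smul' := by
        intro c g
        simp only [ContinuousMap.smul_apply, smul_eq_mul, RingHom.id_apply]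
        rw [← integral_const_mul]
        congr 1; ext x; ring }
  have hLb : ∀ g : C(AddCircle (1:ℝ), ℂ), ‖L₀ g‖ ≤ 1 * ‖g‖ := by
    intro g
    have := norm_integral_le_of_norm_le_const (μ := μ)
      (f := fun x : ℝ => e x * g (x : ℝ)) (C := ‖g‖) ?_
    · simpa [L₀] using this
    · refine ae_of_all _ fun x => ?_
      rw [norm_mul, hnorme, one_mul]
      exact g.norm_coe_le_norm _
  let L : C(AddCircle (1:ℝ), ℂ) →L[ℂ] ℂ := LinearMap.mkContinuous L₀ 1 hLb
  have hker : ∀ n : ℤ, fourier n ∈ LinearMap.ker (L : C(AddCircle (1:ℝ), ℂ) →ₗ[ℂ] ℂ) := by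
    intro n
    have : L (fourier n) = FT μ (ξ + ((-n : ℤ) : ℝ)) := by
      show (∫ x, e x * (fourier n) ((x : ℝ) : AddCircle (1:ℝ)) ∂μ) = _
      unfold FT
      congr 1; ext x
      rw [fourier_coe_apply, ← Complex.exp_add]
      push_cast
      congr 1
      field_simp
      ring
    rw [LinearMap.mem_ker, ContinuousLinearMap.coe_coe, this]
    have h2 := h (-n)
    push_cast at h2 ⊢
    exact h2
  have htop : (Submodule.span ℂ (Set.range (@fourier 1))).topologicalClosure = ⊤ :=
    span_fourier_closure_eq_top
  have hle : (Submodule.span ℂ (Set.range (@fourier 1))).topologicalClosure ≤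
      LinearMap.ker (L : C(AddCircle (1:ℝ), ℂ) →ₗ[ℂ] ℂ) := by
    apply Submodule.topologicalClosure_minimal
    · rw [Submodule.span_le]
      rintro _ ⟨n, rfl⟩
      exact hker n
    · exact ContinuousLinearMap.isClosed_ker L
  have : f ∈ LinearMap.ker (L : C(AddCircle (1:ℝ), ℂ) →ₗ[ℂ] ℂ) := hle (htop ▸ Submodule.mem_top)
  rw [LinearMap.mem_ker] at this
  exact this

lemma measure_Icc_zero (μ : Measure ℝ) [IsProbabilityMeasure μ]
    (hsupp : μ (Set.Icc (0 : ℝ) 1)ᶜ = 0) (ξ : ℝ)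
    (h : ∀ k : ℤ, FT μ (ξ + (k : ℝ)) = 0) {ε : ℝ} (hε : 0 < ε) :
    μ (Set.Icc ε (1 - ε)) = 0 := by
  haveI : Fact ((0:ℝ) < 1) := ⟨one_pos⟩
  set φ : ℝ → ℝ := fun x => max 0 (min (x / ε) (min 1 ((1 - x) / ε))) with hφ
  have hφc : Continuous φ :=
    Continuous.max continuous_const ((continuous_id.div_const ε).min
      (continuous_const.min ((continuous_const.sub continuous_id).div_const ε)))
  have hφ0 : φ 0 = 0 := by
    have h1 : min ((0:ℝ) / ε) (min 1 ((1 - 0) / ε)) = 0 := by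
      rw [zero_div]
      exact min_eq_left (le_min zero_le_one (by positivity))
    simp only [hφ]
    rw [h1, max_self]
  have hφ1 : φ 1 = 0 := by
    have h1 : min ((1:ℝ) / ε) (min 1 ((1 - 1) / ε)) = 0 := by
      rw [sub_self, zero_div, min_eq_right zero_le_one]
      exact min_eq_right (by positivity)
    simp only [hφ]
    rw [h1, max_self]
  have hφnn : ∀ x, 0 ≤ φ x := fun x => le_max_left _ _
  have hφle : ∀ x, φ x ≤ 1 := fun x =>
    max_le zero_le_one ((min_le_right _ _).trans (min_le_left _ _))
  have hφone : ∀ x ∈ Set.Icc ε (1 - ε), φ x = 1 := by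
    rintro x ⟨hx1, hx2⟩
    have h1 : (1:ℝ) ≤ x / ε := (one_le_div hε).2 hx1
    have h2 : (1:ℝ) ≤ (1 - x) / ε := (one_le_div hε).2 (by linarith)
    simp only [hφ]
    rw [min_eq_left h2, min_eq_right h1, max_eq_right zero_le_one]
  set g : ℝ → ℂ := fun x => Complex.exp ((2 * (Real.pi : ℂ) * Complex.I) * ξ * x) * (φ x : ℂ)
    with hg
  have hg01 : g 0 = g 1 := by simp [hg, hφ0, hφ1]
  have hgc : Continuous g :=
    (Complex.continuous_exp.comp (by fun_prop)).mul (Complex.continuous_ofReal.comp hφc)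
  set F : C(AddCircle (1:ℝ), ℂ) :=
    ⟨AddCircle.liftIco 1 0 g, AddCircle.liftIco_zero_continuous hg01 hgc.continuousOn⟩ with hF
  have hkey := key_s2 μ ξ h F
  have hae : ∀ᵐ x ∂μ, x ∈ Set.Icc (0:ℝ) 1 := by
    rw [ae_iff]
    exact hsupp
  have hcong : ∀ᵐ (x : ℝ) ∂μ,
      Complex.exp (-(2 * (Real.pi : ℂ) * Complex.I) * ξ * x) * F ((x : ℝ) : AddCircle (1:ℝ))
        = (φ x : ℂ) := by
    filter_upwards [hae] with x hx
    rcases lt_or_eq_of_le hx.2 with hlt | heq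
    · have hmem : x ∈ Set.Ico (0:ℝ) 1 := ⟨hx.1, hlt⟩
      show Complex.exp _ * AddCircle.liftIco 1 0 g ((x : ℝ) : AddCircle (1:ℝ)) = _
      rw [AddCircle.liftIco_zero_coe_apply hmem, hg]
      rw [← mul_assoc, ← Complex.exp_add]
      ring_nf
      rw [Complex.exp_zero, one_mul]
    · subst heq
      show Complex.exp _ * AddCircle.liftIco 1 0 g ((1 : ℝ) : AddCircle (1:ℝ)) = _
      have : ((1:ℝ) : AddCircle (1:ℝ)) = ((0:ℝ) : AddCircle (1:ℝ)) := by
        rw [QuotientAddGroup.mk_zero]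
        exact AddCircle.coe_period 1
      rw [this, AddCircle.liftIco_zero_coe_apply (by constructor <;> norm_num)]
      simp [hg, hφ0, hφ1]
  have hint : ∫ x, (φ x : ℂ) ∂μ = 0 := by
    rw [← integral_congr_ae hcong]
    exact hkey
  have hreal : ∫ x, φ x ∂μ = 0 := by
    have h2 := _root_.integral_ofReal (𝕜 := ℂ) (f := φ) (μ := μ)
    have h3 : ((∫ x, φ x ∂μ : ℝ) : ℂ) = 0 := Eq.trans h2.symm hint
    exact_mod_cast h3
  have hφint : Integrable φ μ :=
    ⟨hφc.aestronglyMeasurable, HasFiniteIntegral.of_bounded (C := 1)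
      (ae_of_all _ fun x => by rw [Real.norm_eq_abs, abs_of_nonneg (hφnn x)]; exact hφle x)⟩
  have hbound : (μ (Set.Icc ε (1 - ε))).toReal ≤ 0 := by
    have h1 : (μ (Set.Icc ε (1 - ε))).toReal = ∫ x in Set.Icc ε (1 - ε), φ x ∂μ := by
      rw [setIntegral_congr_fun measurableSet_Icc hφone]
      simp
      rfl
    rw [h1, ← hreal]
    exact setIntegral_le_integral hφint (ae_of_all _ hφnn)
  have htr : (μ (Set.Icc ε (1 - ε))).toReal = 0 :=
    le_antisymm hbound ENNReal.toReal_nonneg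
  exact (ENNReal.toReal_eq_zero_iff _).1 htr |>.resolve_right (measure_ne_top μ _)

lemma measure_Ioo_zero (μ : Measure ℝ) [IsProbabilityMeasure μ]
    (hsupp : μ (Set.Icc (0 : ℝ) 1)ᶜ = 0) (ξ : ℝ)
    (h : ∀ k : ℤ, FT μ (ξ + (k : ℝ)) = 0) :
    μ (Set.Ioo (0:ℝ) 1) = 0 := by
  have hsub : Set.Ioo (0:ℝ) 1 ⊆
      ⋃ n : ℕ, Set.Icc ((1:ℝ)/(n+2)) (1 - (1:ℝ)/(n+2)) := by
    rintro x ⟨hx0, hx1⟩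
    obtain ⟨n, hn⟩ := exists_nat_gt (max (1/x) (1/(1-x)))
    refine Set.mem_iUnion.2 ⟨n, ?_, ?_⟩
    · rw [div_le_iff₀ (by positivity)]
      have : 1/x < (n:ℝ) + 2 := lt_of_le_of_lt (le_max_left _ _)
        (hn.trans_le (le_add_of_nonneg_right (by norm_num)))
      rw [div_lt_iff₀ hx0] at this
      nlinarith
    · have h1x : (0:ℝ) < 1 - x := by linarith
      have : 1/(1-x) < (n:ℝ) + 2 := lt_of_le_of_lt (le_max_right _ _)
        (hn.trans_le (le_add_of_nonneg_right (by norm_num)))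
      rw [div_lt_iff₀ h1x] at this
      rw [le_sub_comm, div_le_iff₀ (by positivity)]
      nlinarith
  refine measure_mono_null hsub (measure_iUnion_null fun n => ?_)
  exact measure_Icc_zero μ hsupp ξ h (by positivity)

lemma measure_single (μ : Measure ℝ) (s : Set ℝ) (a : ℝ) :
    μ (s ∩ {a}) = μ {a} * s.indicator 1 a := by
  by_cases ha : a ∈ s
  · rw [Set.inter_eq_right.2 (Set.singleton_subset_iff.2 ha), Set.indicator_of_mem ha]
    simp
  · have : s ∩ {a} = ∅ := by
      ext y; simp only [Set.mem_inter_iff, Set.mem_singleton_iff, Set.mem_empty_iff_false,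
        iff_false, not_and]
      rintro hy rfl; exact ha hy
    rw [this, Set.indicator_of_notMem ha]
    simp

/-- The main theorem. -/
theorem stmt2 (μ : Measure ℝ) [IsProbabilityMeasure μ]
    (hsupp : μ (Set.Icc (0 : ℝ) 1)ᶜ = 0) :
    (Zset μ).Nonempty ↔ μ = rho := by
  constructor
  · rintro ⟨ξ, hξ⟩
    have hξ' : ∀ k : ℤ, FT μ (ξ + (k : ℝ)) = 0 := hξ
    have hIoo : μ (Set.Ioo (0:ℝ) 1) = 0 := measure_Ioo_zero μ hsupp ξ hξ'
    -- μ is concentrated on {0, 1}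
    have hpair : μ ({0, 1} : Set ℝ)ᶜ = 0 := by
      have hsub : ({0, 1} : Set ℝ)ᶜ ⊆ (Set.Icc (0:ℝ) 1)ᶜ ∪ Set.Ioo (0:ℝ) 1 := by
        intro x hx
        simp only [Set.mem_compl_iff, Set.mem_insert_iff, Set.mem_singleton_iff, not_or] at hx
        by_cases hmem : x ∈ Set.Icc (0:ℝ) 1
        · right
          exact ⟨lt_of_le_of_ne hmem.1 (Ne.symm hx.1), lt_of_le_of_ne hmem.2 hx.2⟩
        · left; exact hmem
      exact measure_mono_null hsub
        (le_antisymm ((measure_union_le _ _).trans (by rw [hsupp, hIoo]; simp)) zero_le)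
    -- μ decomposes as point masses
    have hdecomp : μ = μ {0} • Measure.dirac (0:ℝ) + μ {1} • Measure.dirac (1:ℝ) := by
      ext s hs
      have h1 : μ (s ∩ {0, 1}) + μ (s \ {0, 1}) = μ s :=
        measure_inter_add_diff s (by measurability)
      have h2 : μ (s \ {0, 1}) = 0 :=
        measure_mono_null (Set.diff_subset_compl s _) hpair
      have h3 : s ∩ ({0, 1} : Set ℝ) = (s ∩ {0}) ∪ (s ∩ {1}) := by
        rw [← Set.inter_union_distrib_left]
        rfl
      have h4 : μ (s ∩ {0, 1}) = μ (s ∩ {0}) + μ (s ∩ {1}) := by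
        rw [h3]
        apply measure_union
        · apply Set.disjoint_of_subset Set.inter_subset_right Set.inter_subset_right
          simp [Set.disjoint_singleton]
        · exact hs.inter (measurableSet_singleton 1)
      rw [Measure.add_apply, Measure.smul_apply, Measure.smul_apply,
        Measure.dirac_apply' _ hs, Measure.dirac_apply' _ hs, smul_eq_mul, smul_eq_mul,
        ← measure_single μ s 0, ← measure_single μ s 1, ← h4, ← h1, h2, add_zero]
    -- total mass
    have hmass : μ {0} + μ {1} = 1 := by
      have := measure_univ (μ := μ)
      conv_lhs at this => rw [hdecomp]
      simpa using this
    -- the Fourier condition at k = 0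
    have hFT := hξ' 0
    rw [show ξ + ((0:ℤ):ℝ) = ξ by simp] at hFT
    conv_lhs at hFT => rw [hdecomp]
    rw [FT_smul_dirac_add _ _ _ _ (measure_ne_top μ _) (measure_ne_top μ _)] at hFT
    set A := (μ {(0:ℝ)}).toReal with hA
    set B := (μ {(1:ℝ)}).toReal with hB
    have hAB : A + B = 1 := by
      have := congrArg ENNReal.toReal hmass
      rwa [ENNReal.toReal_add (measure_ne_top μ _) (measure_ne_top μ _),
        ENNReal.toReal_one] at this
    have hAnn : 0 ≤ A := ENNReal.toReal_nonneg
    have hBnn : 0 ≤ B := ENNReal.toReal_nonneg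
    -- simplify hFT
    have hFT' : (A : ℂ) + (B : ℂ) * Complex.exp (-(2 * (Real.pi : ℂ) * Complex.I) * ξ) = 0 := by
      have e0 : -(2 * (Real.pi : ℂ) * Complex.I) * ξ * ((0:ℝ):ℂ) = 0 := by simp
      have e1 : -(2 * (Real.pi : ℂ) * Complex.I) * ξ * ((1:ℝ):ℂ) =
          -(2 * (Real.pi : ℂ) * Complex.I) * ξ := by simp
      rw [e0, e1, Complex.exp_zero] at hFT
      simpa [smul_eq_mul] using hFT
    have hnorm : ‖Complex.exp (-(2 * (Real.pi : ℂ) * Complex.I) * (ξ:ℂ))‖ = 1 := by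
      have hx : -(2 * (Real.pi : ℂ) * Complex.I) * (ξ:ℂ) =
          ((-(2*Real.pi*ξ) : ℝ) : ℂ) * Complex.I := by push_cast; ring
      rw [hx]
      exact Complex.norm_exp_ofReal_mul_I _
    have hAeqB : A = B := by
      have : (A : ℂ) = -((B : ℂ) * Complex.exp (-(2 * (Real.pi : ℂ) * Complex.I) * ξ)) := by
        linear_combination hFT'
      have hnA : ‖(A : ℂ)‖ = ‖(B : ℂ)‖ := by
        rw [this, norm_neg, norm_mul, hnorm, mul_one]
      rw [Complex.norm_real, Complex.norm_real, Real.norm_eq_abs, Real.norm_eq_abs,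
        abs_of_nonneg hAnn, abs_of_nonneg hBnn] at hnA
      exact hnA
    have hAval : A = 1/2 := by
      nlinarith [hAB, hAeqB]
    have hBval : B = 1/2 := by
      nlinarith [hAB, hAeqB]
    have hμ0 : μ {(0:ℝ)} = (2:ENNReal)⁻¹ := by
      rw [← ENNReal.ofReal_toReal (measure_ne_top μ {(0:ℝ)}), ← hA, hAval]
      rw [show (1:ℝ)/2 = (2:ℝ)⁻¹ by norm_num, ENNReal.ofReal_inv_of_pos (by norm_num)]
      norm_num
    have hμ1 : μ {(1:ℝ)} = (2:ENNReal)⁻¹ := by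
      rw [← ENNReal.ofReal_toReal (measure_ne_top μ {(1:ℝ)}), ← hB, hBval]
      rw [show (1:ℝ)/2 = (2:ℝ)⁻¹ by norm_num, ENNReal.ofReal_inv_of_pos (by norm_num)]
      norm_num
    rw [hdecomp, hμ0, hμ1]
    rfl
  · rintro rfl
    exact ⟨1/2, fun k => FT_rho_half k⟩
end

section
/- Let Φ be a family of Borel probability measures on [0,1] such that for every ν ∈ Φ and every weak limit ν₀ of sequences in Φ, the integral periodic zero set Z(ν) and Z(ν₀) are empty. Then for every x ∈ ℝ there exists ε_x > 0 such that for all ν ∈ Φ, sup_{k ∈ ℤ} |ν̂(x + k)| > ε_x. -/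
open MeasureTheory Filter Topology

section Aux

open Set

/-! ### CDF lemmas -/

noncomputable def cdfR (μ : Measure ℝ) (t : ℝ) : ℝ := (μ (Set.Iic t)).toReal

lemma cdfR_mono (μ : Measure ℝ) [IsFiniteMeasure μ] : Monotone (cdfR μ) := by
  intro a b hab
  exact ENNReal.toReal_mono (measure_ne_top _ _) (measure_mono (Iic_subset_Iic.2 hab))

lemma cdfR_nonneg (μ : Measure ℝ) (t : ℝ) : 0 ≤ cdfR μ t := ENNReal.toReal_nonneg

lemma cdfR_le_one (μ : Measure ℝ) [IsProbabilityMeasure μ] (t : ℝ) : cdfR μ t ≤ 1 := by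
  have := prob_le_one (μ := μ) (s := Set.Iic t)
  simpa [cdfR] using ENNReal.toReal_mono (by simp) this

lemma cdfR_of_neg (μ : Measure ℝ) (hsupp : μ (Set.Icc (0:ℝ) 1)ᶜ = 0) {t : ℝ} (ht : t < 0) :
    cdfR μ t = 0 := by
  have h : μ (Set.Iic t) = 0 := by
    refine measure_mono_null ?_ hsupp
    intro y hy
    simp only [mem_Iic] at hy
    simp only [mem_compl_iff, mem_Icc, not_and, not_le]
    intro h0; linarith
  simp [cdfR, h]

lemma cdfR_of_one_le (μ : Measure ℝ) [IsProbabilityMeasure μ]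
    (hsupp : μ (Set.Icc (0:ℝ) 1)ᶜ = 0) {t : ℝ} (ht : 1 ≤ t) : cdfR μ t = 1 := by
  have h : μ (Set.Iic t) = 1 := by
    have h1 : μ (Set.Ioi t) = 0 := by
      refine measure_mono_null ?_ hsupp
      intro y hy
      simp only [mem_Ioi] at hy
      simp only [mem_compl_iff, mem_Icc, not_and, not_le]
      intro h0; linarith
    have := measure_add_measure_compl (μ := μ) (s := Set.Iic t) measurableSet_Iic
    rw [compl_Iic] at this
    rw [h1, add_zero] at this
    simpa using this
  simp [cdfR, h]

lemma cdfR_right_cont (μ : Measure ℝ) [IsFiniteMeasure μ] (t : ℝ) :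
    Tendsto (fun m : ℕ => cdfR μ (t + 1 / (m + 1))) atTop (𝓝 (cdfR μ t)) := by
  have hset : ⋂ m : ℕ, Set.Iic (t + 1 / (m + 1)) = Set.Iic t := by
    ext y
    simp only [mem_iInter, mem_Iic]
    constructor
    · intro h
      by_contra hy
      push_neg at hy
      obtain ⟨m, hm⟩ := exists_nat_one_div_lt (sub_pos.2 hy)
      have := h m
      linarith
    · intro h m
      have : (0:ℝ) < 1 / (m + 1) := by positivity
      linarith
  have h1 : Tendsto (fun m : ℕ => μ (Set.Iic (t + 1 / (m + 1)))) atTop (𝓝 (μ (Set.Iic t))) := by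
    have := tendsto_measure_iInter_atTop (μ := μ)
      (s := fun m : ℕ => Set.Iic (t + 1 / (m + 1)))
      (fun m => measurableSet_Iic.nullMeasurableSet)
      (by
        intro a b hab
        apply Iic_subset_Iic.2
        have hc : (a:ℝ) ≤ b := Nat.cast_le.2 hab
        have : (1:ℝ) / (b + 1) ≤ 1 / (a + 1) := by
          apply one_div_le_one_div_of_le (by positivity)
          linarith
        linarith)
      ⟨0, measure_ne_top _ _⟩
    rwa [hset] at this
  exact (ENNReal.tendsto_toReal (measure_ne_top _ _)).comp h1

/-! ### Generalized quantile functions -/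

noncomputable def qgen (A : ℝ → Set ℝ) (u : ℝ) : ℝ := sInf (A u ∪ Set.Ici 1)

lemma qgen_set_nonempty (A : ℝ → Set ℝ) (u : ℝ) : (A u ∪ Set.Ici 1).Nonempty :=
  ⟨1, Or.inr (by simp)⟩

lemma qgen_bddBelow {A : ℝ → Set ℝ} {u : ℝ} (hpos : A u ⊆ Set.Ici 0) :
    BddBelow (A u ∪ Set.Ici 1) := by
  refine ⟨0, ?_⟩
  rintro s (hs | hs)
  · exact hpos hs
  · exact le_trans zero_le_one hs

lemma qgen_nonneg {A : ℝ → Set ℝ} {u : ℝ} (hpos : A u ⊆ Set.Ici 0) : 0 ≤ qgen A u :=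
  le_csInf (qgen_set_nonempty A u) (by rintro s (hs | hs); · exact hpos hs
                                       · exact le_trans zero_le_one hs)

lemma qgen_le_one {A : ℝ → Set ℝ} {u : ℝ} (hpos : A u ⊆ Set.Ici 0) : qgen A u ≤ 1 :=
  csInf_le (qgen_bddBelow hpos) (Or.inr (by simp))

lemma qgen_monotone {A : ℝ → Set ℝ}
    (hanti : ∀ ⦃u v : ℝ⦄, u ≤ v → A v ⊆ A u)
    (hpos : ∀ ⦃u : ℝ⦄, 0 < u → A u ⊆ Set.Ici 0)
    (hnb : ∀ ⦃u : ℝ⦄, u ≤ 0 → ¬BddBelow (A u)) : Monotone (qgen A) := by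
  intro u v huv
  by_cases hu : 0 < u
  · exact csInf_le_csInf (qgen_bddBelow (hpos hu)) (qgen_set_nonempty A v)
      (union_subset_union_left _ (hanti huv))
  · push_neg at hu
    have h0 : qgen A u = 0 := by
      have : ¬BddBelow (A u ∪ Set.Ici 1) := fun h => hnb hu (h.mono subset_union_left)
      exact Real.sInf_of_not_bddBelow this
    rw [h0]
    by_cases hv : 0 < v
    · exact qgen_nonneg (hpos hv)
    · push_neg at hv
      have : ¬BddBelow (A v ∪ Set.Ici 1) := fun h => hnb hv (h.mono subset_union_left)
      rw [qgen, Real.sInf_of_not_bddBelow this]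

/-- `A` built from a real cdf. -/
def AF (F : ℝ → ℝ) (u : ℝ) : Set ℝ := {s | u ≤ F s}

/-- `A` built from a rational cdf. -/
def Ag (g : ℚ → ℝ) (u : ℝ) : Set ℝ := (fun q : ℚ => (q : ℝ)) '' {q | u ≤ g q}

lemma AF_anti {F : ℝ → ℝ} : ∀ ⦃u v : ℝ⦄, u ≤ v → AF F v ⊆ AF F u := by
  intro u v huv s hs; exact le_trans huv hs

lemma AF_pos {F : ℝ → ℝ} (h0 : ∀ ⦃t : ℝ⦄, t < 0 → F t = 0) :
    ∀ ⦃u : ℝ⦄, 0 < u → AF F u ⊆ Set.Ici 0 := by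
  intro u hu s hs
  simp only [mem_Ici]
  by_contra hneg
  push_neg at hneg
  have := h0 hneg
  rw [AF, mem_setOf_eq, this] at hs
  linarith

lemma AF_nb {F : ℝ → ℝ} : ∀ ⦃u : ℝ⦄, u ≤ 0 → (∀ t, 0 ≤ F t) → ¬BddBelow (AF F u) := by
  intro u hu hF hb
  obtain ⟨c, hc⟩ := hb
  have : c ≤ c - 1 := hc (show c - 1 ∈ AF F u from le_trans hu (hF _))
  linarith

/-- Key equivalence: `qgen (AF F) u ≤ t ↔ u ≤ F t` for `u ∈ (0,1)`, given right
continuity of `F` at `t`. -/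
lemma qgen_AF_le_iff {F : ℝ → ℝ} (hmono : Monotone F)
    (h0 : ∀ ⦃t : ℝ⦄, t < 0 → F t = 0) (h1 : ∀ ⦃t : ℝ⦄, 1 ≤ t → F t = 1)
    {u t : ℝ} (hu : u ∈ Set.Ioo (0:ℝ) 1)
    (hrc : Tendsto (fun m : ℕ => F (t + 1 / (m + 1))) atTop (𝓝 (F t))) :
    qgen (AF F) u ≤ t ↔ u ≤ F t := by
  constructor
  · intro h
    have key : ∀ ε : ℝ, 0 < ε → u ≤ F (t + ε) := by
      intro ε hε
      have hlt : qgen (AF F) u < t + ε := lt_of_le_of_lt h (by linarith)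
      obtain ⟨a, ha, halt⟩ := exists_lt_of_csInf_lt (qgen_set_nonempty _ _) hlt
      rcases ha with ha | ha
      · exact le_trans ha (hmono (le_of_lt halt))
      · rw [h1 (le_trans ha (le_of_lt halt))]
        exact le_of_lt hu.2
    refine ge_of_tendsto hrc (Eventually.of_forall fun m => key _ (by positivity))
  · intro h
    exact csInf_le (qgen_bddBelow (AF_pos h0 hu.1)) (Or.inl h)

lemma Ag_pos {g : ℚ → ℝ} (hg0 : ∀ ⦃q : ℚ⦄, q < 0 → g q = 0) :
    ∀ ⦃u : ℝ⦄, 0 < u → Ag g u ⊆ Set.Ici 0 := by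
  rintro u hu s ⟨q, hq, rfl⟩
  simp only [mem_setOf_eq] at hq
  simp only [mem_Ici]
  by_contra hneg
  push_neg at hneg
  have hq0 : q < 0 := by exact_mod_cast hneg
  rw [hg0 hq0] at hq
  linarith

lemma Ag_nb {g : ℚ → ℝ} (hgnn : ∀ q : ℚ, 0 ≤ g q) :
    ∀ ⦃u : ℝ⦄, u ≤ 0 → ¬BddBelow (Ag g u) := by
  intro u hu hb
  obtain ⟨c, hc⟩ := hb
  obtain ⟨q, hq⟩ := exists_rat_lt (c - 1)
  have hmem : (q : ℝ) ∈ Ag g u := ⟨q, le_trans hu (hgnn q), rfl⟩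
  have := hc hmem
  linarith

lemma Ag_anti {g : ℚ → ℝ} : ∀ ⦃u v : ℝ⦄, u ≤ v → Ag g v ⊆ Ag g u := by
  rintro u v huv s ⟨q, hq, rfl⟩
  exact ⟨q, le_trans huv hq, rfl⟩

/-- Convergence of quantile functions at continuity points. -/
lemma quantile_tendsto
    {g : ℚ → ℝ} (hg0 : ∀ ⦃q : ℚ⦄, q < 0 → g q = 0) (hg1 : ∀ ⦃q : ℚ⦄, (1:ℚ) ≤ q → g q = 1)
    {Fn : ℕ → ℝ → ℝ} (hFmono : ∀ n, Monotone (Fn n))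
    (hF0 : ∀ n, ∀ ⦃t : ℝ⦄, t < 0 → Fn n t = 0)
    (hconv : ∀ q : ℚ, Tendsto (fun n => Fn n (q : ℝ)) atTop (𝓝 (g q)))
    {u : ℝ} (hu : u ∈ Set.Ioo (0:ℝ) 1)
    (hcont : ContinuousAt (qgen (Ag g)) u) :
    Tendsto (fun n => qgen (AF (Fn n)) u) atTop (𝓝 (qgen (Ag g) u)) := by
  refine tendsto_order.2 ⟨?_, ?_⟩
  · -- lower bound
    intro a ha
    have hev : qgen (Ag g) ⁻¹' (Set.Ioi a) ∈ 𝓝 u :=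
      hcont.preimage_mem_nhds (Ioi_mem_nhds ha)
    obtain ⟨l, r, humem, hsub⟩ := mem_nhds_iff_exists_Ioo_subset.1 hev
    set u' : ℝ := (max l 0 + u) / 2 with hu'def
    have hl : l < u := humem.1
    have hu'lt : u' < u := by
      have : max l 0 < u := max_lt hl hu.1
      rw [hu'def]; linarith
    have hu'pos : 0 < u' := by
      have h0 : (0:ℝ) ≤ max l 0 := le_max_right _ _
      rw [hu'def]; linarith [hu.1]
    have hu'mem : u' ∈ Set.Ioo l r := by
      constructor
      · have : l ≤ max l 0 := le_max_left _ _
        rw [hu'def]; linarith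
      · exact lt_trans hu'lt humem.2
    have haq : a < qgen (Ag g) u' := hsub hu'mem
    obtain ⟨q, hq1, hq2⟩ := exists_rat_btwn haq
    have hgq : g q < u' := by
      by_contra hcon
      push_neg at hcon
      have hmem : (q : ℝ) ∈ Ag g u' := ⟨q, hcon, rfl⟩
      have := csInf_le (qgen_bddBelow (Ag_pos hg0 hu'pos)) (Or.inl hmem)
      rw [← qgen] at this
      linarith
    have hgu : g q < u := lt_trans hgq hu'lt
    filter_upwards [(hconv q).eventually_lt_const hgu] with n hn
    have hqle : (q : ℝ) ≤ qgen (AF (Fn n)) u := by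
      refine le_csInf (qgen_set_nonempty _ _) ?_
      rintro s (hs | hs)
      · simp only [AF, mem_setOf_eq] at hs
        by_contra hcon
        push_neg at hcon
        have : Fn n s ≤ Fn n q := hFmono n (le_of_lt hcon)
        linarith
      · have hq_le_one : (q : ℝ) ≤ 1 := by
          by_contra hcon
          push_neg at hcon
          have : (1:ℚ) ≤ q := by exact_mod_cast le_of_lt hcon
          rw [hg1 this] at hgu
          linarith [hu.2]
        linarith [mem_Ici.1 hs]
    linarith
  · -- upper bound
    intro b hb
    have hev : qgen (Ag g) ⁻¹' (Set.Iio b) ∈ 𝓝 u :=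
      hcont.preimage_mem_nhds (Iio_mem_nhds hb)
    obtain ⟨l, r, humem, hsub⟩ := mem_nhds_iff_exists_Ioo_subset.1 hev
    set u'' : ℝ := (u + r) / 2 with hudef
    have hru : u < r := humem.2
    have h1 : u < u'' := by rw [hudef]; linarith
    have h2 : u'' < r := by rw [hudef]; linarith
    have hmem'' : u'' ∈ Set.Ioo l r := ⟨lt_trans humem.1 h1, h2⟩
    have hlt : qgen (Ag g) u'' < b := hsub hmem''
    obtain ⟨a, hamem, halt⟩ := exists_lt_of_csInf_lt (qgen_set_nonempty _ _) hlt
    rcases hamem with ⟨q, hq, rfl⟩ | haI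
    · simp only [mem_setOf_eq] at hq
      have hugq : u < g q := lt_of_lt_of_le h1 hq
      filter_upwards [(hconv q).eventually_const_lt hugq] with n hn
      have : qgen (AF (Fn n)) u ≤ (q : ℝ) :=
        csInf_le (qgen_bddBelow (AF_pos (hF0 n) hu.1)) (Or.inl (le_of_lt hn))
      linarith
    · filter_upwards with n
      have := qgen_le_one (AF_pos (hF0 n) hu.1)
      have h1a : (1:ℝ) ≤ a := mem_Ici.1 haI
      linarith

/-! ### The uniform measure on `(0,1)` and the quantile representation -/

noncomputable def muL : Measure ℝ := (volume : Measure ℝ).restrict (Set.Ioo 0 1)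

instance : IsProbabilityMeasure muL := by
  constructor
  simp [muL, Real.volume_Ioo]

lemma vol_Iic_inter_Ioo {c : ℝ} (hc0 : 0 ≤ c) (hc1 : c ≤ 1) :
    muL (Set.Iic c) = ENNReal.ofReal c := by
  rw [muL, Measure.restrict_apply measurableSet_Iic]
  rcases lt_or_eq_of_le hc1 with hlt | heq
  · have hset : Set.Iic c ∩ Set.Ioo 0 1 = Set.Ioc 0 c := by
      ext u
      simp only [mem_inter_iff, mem_Iic, mem_Ioo, mem_Ioc]
      constructor
      · rintro ⟨h1, h2, _⟩; exact ⟨h2, h1⟩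
      · rintro ⟨h1, h2⟩; exact ⟨h2, h1, lt_of_le_of_lt h2 hlt⟩
    rw [hset, Real.volume_Ioc, sub_zero]
  · subst heq
    have hset : Set.Iic (1:ℝ) ∩ Set.Ioo 0 1 = Set.Ioo 0 1 := by
      apply inter_eq_right.2
      intro u hu
      exact le_of_lt hu.2
    rw [hset, Real.volume_Ioo]
    norm_num

lemma qgen_AF_cdfR_monotone (ν : Measure ℝ) [IsProbabilityMeasure ν]
    (hsupp : ν (Set.Icc (0:ℝ) 1)ᶜ = 0) : Monotone (qgen (AF (cdfR ν))) :=
  qgen_monotone AF_anti (AF_pos (fun t ht => cdfR_of_neg ν hsupp ht))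
    (fun u hu => AF_nb hu (cdfR_nonneg ν))

lemma map_qgen_AF (ν : Measure ℝ) [IsProbabilityMeasure ν]
    (hsupp : ν (Set.Icc (0:ℝ) 1)ᶜ = 0) :
    Measure.map (qgen (AF (cdfR ν))) muL = ν := by
  have hQm : Measurable (qgen (AF (cdfR ν))) := (qgen_AF_cdfR_monotone ν hsupp).measurable
  haveI : IsProbabilityMeasure (Measure.map (qgen (AF (cdfR ν))) muL) :=
    Measure.isProbabilityMeasure_map hQm.aemeasurable
  apply Measure.ext_of_Iic
  intro t
  rw [Measure.map_apply hQm measurableSet_Iic]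
  have hset : qgen (AF (cdfR ν)) ⁻¹' Set.Iic t ∩ Set.Ioo 0 1
      = Set.Iic (cdfR ν t) ∩ Set.Ioo 0 1 := by
    ext u
    simp only [mem_inter_iff, mem_preimage, mem_Iic]
    constructor
    · rintro ⟨h1, h2⟩
      exact ⟨(qgen_AF_le_iff (cdfR_mono ν) (fun s hs => cdfR_of_neg ν hsupp hs)
        (fun s hs => cdfR_of_one_le ν hsupp hs) h2 (cdfR_right_cont ν t)).1 h1, h2⟩
    · rintro ⟨h1, h2⟩
      exact ⟨(qgen_AF_le_iff (cdfR_mono ν) (fun s hs => cdfR_of_neg ν hsupp hs)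
        (fun s hs => cdfR_of_one_le ν hsupp hs) h2 (cdfR_right_cont ν t)).2 h1, h2⟩
  rw [muL, Measure.restrict_apply (hQm measurableSet_Iic), hset]
  have := vol_Iic_inter_Ioo (cdfR_nonneg ν t) (cdfR_le_one ν t)
  rw [muL, Measure.restrict_apply measurableSet_Iic] at this
  rw [this, cdfR, ENNReal.ofReal_toReal (measure_ne_top ν _)]

/-! ### Fourier transform via bounded continuous functions -/

noncomputable def cosB (ξ : ℝ) : BoundedContinuousFunction ℝ ℝ :=
  BoundedContinuousFunction.ofNormedAddCommGroup (fun y => Real.cos (2 * Real.pi * ξ * y))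
    (by fun_prop) 1 (fun y => by
      rw [Real.norm_eq_abs]; exact Real.abs_cos_le_one _)

noncomputable def sinB (ξ : ℝ) : BoundedContinuousFunction ℝ ℝ :=
  BoundedContinuousFunction.ofNormedAddCommGroup (fun y => Real.sin (2 * Real.pi * ξ * y))
    (by fun_prop) 1 (fun y => by
      rw [Real.norm_eq_abs]; exact Real.abs_sin_le_one _)

lemma FT_eq (μ : Measure ℝ) [IsFiniteMeasure μ] (ξ : ℝ) :
    FT μ ξ = ((∫ y, cosB ξ y ∂μ : ℝ) : ℂ) - ((∫ y, sinB ξ y ∂μ : ℝ) : ℂ) * Complex.I := by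
  have hint : ∀ y : ℝ,
      Complex.exp (-(2 * (Real.pi : ℂ) * Complex.I) * (ξ : ℂ) * (y : ℂ))
        = ((Real.cos (2 * Real.pi * ξ * y) : ℝ) : ℂ)
          - ((Real.sin (2 * Real.pi * ξ * y) : ℝ) : ℂ) * Complex.I := by
    intro y
    have h1 : (-(2 * (Real.pi : ℂ) * Complex.I) * (ξ : ℂ) * (y : ℂ))
        = ((-(2 * Real.pi * ξ * y) : ℝ) : ℂ) * Complex.I := by push_cast; ring
    rw [h1, Complex.exp_mul_I, ← Complex.ofReal_cos, ← Complex.ofReal_sin,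
      Real.cos_neg, Real.sin_neg]
    push_cast; ring
  have int1 : Integrable (fun y : ℝ => ((Real.cos (2 * Real.pi * ξ * y) : ℝ) : ℂ)) μ :=
    ((cosB ξ).integrable μ).ofReal
  have int2 : Integrable
      (fun y : ℝ => ((Real.sin (2 * Real.pi * ξ * y) : ℝ) : ℂ) * Complex.I) μ :=
    (((sinB ξ).integrable μ).ofReal).mul_const _
  rw [FT]
  simp only [hint]
  rw [integral_sub int1 int2, integral_mul_const]
  simp only [cosB, sinB, BoundedContinuousFunction.coe_ofNormedAddCommGroup]
  congr 1
  · exact integral_ofReal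
  · congr 1
    exact integral_ofReal

lemma FT_tendsto {s : ℕ → Measure ℝ} {ν₀ : Measure ℝ}
    (hs : ∀ n, IsProbabilityMeasure (s n)) (h0 : IsProbabilityMeasure ν₀)
    (hw : WeakLim s ν₀) (ξ : ℝ) :
    Tendsto (fun n => FT (s n) ξ) atTop (𝓝 (FT ν₀ ξ)) := by
  haveI := h0
  have e : ∀ n, FT (s n) ξ
      = ((∫ y, cosB ξ y ∂(s n) : ℝ) : ℂ) - ((∫ y, sinB ξ y ∂(s n) : ℝ) : ℂ) * Complex.I :=
    fun n => haveI := hs n; FT_eq _ ξ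
  rw [funext e, FT_eq ν₀ ξ]
  exact ((Complex.continuous_ofReal.tendsto _).comp (hw (cosB ξ))).sub
    (((Complex.continuous_ofReal.tendsto _).comp (hw (sinB ξ))).mul_const Complex.I)

end Aux

/-- If `Φ` is a family of probability measures on `[0,1]` such that every member and
every weak limit of sequences from `Φ` has empty integral periodic zero set, then for
each `x ∈ ℝ` there is `ε_x > 0` with `sup_{k ∈ ℤ} |ν̂(x+k)| > ε_x` for all `ν ∈ Φ`. -/
theorem stmt4 (Φ : Set (Measure ℝ))
    (hprob : ∀ ν ∈ Φ, IsProbabilityMeasure ν)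
    (hsupp : ∀ ν ∈ Φ, ν (Set.Icc (0 : ℝ) 1)ᶜ = 0)
    (hZ : ∀ ν ∈ Φ, Zset ν = ∅)
    (hZlim : ∀ ν₀ : Measure ℝ, IsProbabilityMeasure ν₀ →
      (∃ s : ℕ → Measure ℝ, (∀ n, s n ∈ Φ) ∧ WeakLim s ν₀) → Zset ν₀ = ∅) :
    ∀ x : ℝ, ∃ εx > (0 : ℝ), ∀ ν ∈ Φ, ∃ k : ℤ, εx < ‖FT ν (x + (k : ℝ))‖ := by
  intro x
  by_contra hcon
  push_neg at hcon
  have hchoice : ∀ n : ℕ, ∃ ν ∈ Φ, ∀ k : ℤ, ‖FT ν (x + (k : ℝ))‖ ≤ 1 / (n + 1) := by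
    intro n
    obtain ⟨ν, hν, hk⟩ := hcon (1 / (n + 1)) (by positivity)
    exact ⟨ν, hν, hk⟩
  choose ν hmem hbound using hchoice
  haveI hP : ∀ n, IsProbabilityMeasure (ν n) := fun n => hprob _ (hmem n)
  have hS : ∀ n, (ν n) (Set.Icc (0:ℝ) 1)ᶜ = 0 := fun n => hsupp _ (hmem n)
  -- diagonal extraction of a pointwise convergent subsequence of cdfs on rationals
  have hFmem : ∀ n (q : ℚ), cdfR (ν n) (q : ℝ) ∈ Set.Icc (0:ℝ) 1 :=
    fun n q => ⟨cdfR_nonneg _ _, cdfR_le_one _ _⟩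
  obtain ⟨G, φ, hφ, hG⟩ := CompactSpace.tendsto_subseq
    (fun n => (fun q : ℚ => (⟨cdfR (ν n) (q : ℝ), hFmem n q⟩ : Set.Icc (0:ℝ) 1)))
  set g : ℚ → ℝ := fun q => (G q : ℝ) with hgdef
  have hconv : ∀ q : ℚ, Tendsto (fun n => cdfR (ν (φ n)) (q : ℝ)) atTop (𝓝 (g q)) := by
    intro q
    exact (continuous_subtype_val.tendsto (G q)).comp (tendsto_pi_nhds.1 hG q)
  have hgnn : ∀ q : ℚ, 0 ≤ g q := fun q => (G q).2.1
  have hg0 : ∀ ⦃q : ℚ⦄, q < 0 → g q = 0 := by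
    intro q hq
    have hz : ∀ n, cdfR (ν (φ n)) (q : ℝ) = 0 :=
      fun n => cdfR_of_neg _ (hS (φ n)) (by exact_mod_cast hq)
    have h := hconv q
    rw [show (fun n => cdfR (ν (φ n)) (q : ℝ)) = (fun _ : ℕ => (0:ℝ)) from funext hz] at h
    exact tendsto_nhds_unique h tendsto_const_nhds
  have hg1 : ∀ ⦃q : ℚ⦄, (1:ℚ) ≤ q → g q = 1 := by
    intro q hq
    have hz : ∀ n, cdfR (ν (φ n)) (q : ℝ) = 1 :=
      fun n => cdfR_of_one_le _ (hS (φ n)) (by exact_mod_cast hq)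
    have h := hconv q
    rw [show (fun n => cdfR (ν (φ n)) (q : ℝ)) = (fun _ : ℕ => (1:ℝ)) from funext hz] at h
    exact tendsto_nhds_unique h tendsto_const_nhds
  -- the limit measure
  have hQ0mono : Monotone (qgen (Ag g)) :=
    qgen_monotone Ag_anti (Ag_pos hg0) (fun u hu => Ag_nb hgnn hu)
  have hQ0meas : Measurable (qgen (Ag g)) := hQ0mono.measurable
  set ν₀ : Measure ℝ := Measure.map (qgen (Ag g)) muL with hν₀def
  haveI hν₀prob : IsProbabilityMeasure ν₀ := Measure.isProbabilityMeasure_map hQ0meas.aemeasurable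
  -- weak convergence of the subsequence to ν₀
  have hweak : WeakLim (fun n => ν (φ n)) ν₀ := by
    intro f
    have hrw : ∀ n, ∫ y, f y ∂(ν (φ n))
        = ∫ u, f (qgen (AF (cdfR (ν (φ n)))) u) ∂muL := by
      intro n
      conv_lhs => rw [← map_qgen_AF (ν (φ n)) (hS (φ n))]
      rw [integral_map ((qgen_AF_cdfR_monotone (ν (φ n)) (hS (φ n))).measurable).aemeasurable
        f.continuous.aestronglyMeasurable]
    have hrw0 : ∫ y, f y ∂ν₀ = ∫ u, f (qgen (Ag g) u) ∂muL := by
      rw [hν₀def, integral_map hQ0meas.aemeasurable f.continuous.aestronglyMeasurable]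
    rw [funext hrw, hrw0]
    -- dominated convergence
    have hDnull : muL {u : ℝ | ¬ContinuousAt (qgen (Ag g)) u} = 0 := by
      have hcount : {u : ℝ | ¬ContinuousAt (qgen (Ag g)) u}.Countable :=
        hQ0mono.countable_not_continuousAt
      have hvol : (volume : Measure ℝ) {u : ℝ | ¬ContinuousAt (qgen (Ag g)) u} = 0 :=
        hcount.measure_zero _
      refine le_antisymm (le_trans ?_ hvol.le) (zero_le)
      exact Measure.restrict_apply_le _ _
    have hcontae : ∀ᵐ u ∂muL, ContinuousAt (qgen (Ag g)) u := by
      rw [ae_iff]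
      exact hDnull
    have hmemae : ∀ᵐ u ∂muL, u ∈ Set.Ioo (0:ℝ) 1 := ae_restrict_mem measurableSet_Ioo
    refine tendsto_integral_of_dominated_convergence (fun _ => ‖f‖) ?_ ?_ ?_ ?_
    · intro n
      exact (f.continuous.measurable.comp
        (qgen_AF_cdfR_monotone (ν (φ n)) (hS (φ n))).measurable).aestronglyMeasurable
    · exact integrable_const _
    · intro n
      exact Filter.Eventually.of_forall (fun u => f.norm_coe_le_norm _)
    · filter_upwards [hmemae, hcontae] with u huI hucont
      exact (f.continuous.tendsto _).comp
        (quantile_tendsto hg0 hg1 (fun n => cdfR_mono (ν (φ n)))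
          (fun n t ht => cdfR_of_neg _ (hS (φ n)) ht) hconv huI hucont)
  -- conclude
  have hZ0 : Zset ν₀ = ∅ :=
    hZlim ν₀ hν₀prob ⟨fun n => ν (φ n), fun n => hmem (φ n), hweak⟩
  have hxZ : x ∈ Zset ν₀ := by
    intro k
    have h1 : Tendsto (fun n => FT (ν (φ n)) (x + (k : ℝ))) atTop (𝓝 (FT ν₀ (x + (k : ℝ)))) :=
      FT_tendsto (fun n => hP (φ n)) hν₀prob hweak _
    have h2 : Tendsto (fun n => FT (ν (φ n)) (x + (k : ℝ))) atTop (𝓝 0) := by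
      rw [tendsto_zero_iff_norm_tendsto_zero]
      refine squeeze_zero (fun n => norm_nonneg _) (fun n => ?_)
        tendsto_one_div_add_atTop_nhds_zero_nat
      refine le_trans (hbound (φ n) k) ?_
      apply one_div_le_one_div_of_le (by positivity)
      have : (n : ℝ) ≤ (φ n : ℝ) := by exact_mod_cast hφ.le_apply
      linarith
    exact tendsto_nhds_unique h1 h2
  rw [hZ0] at hxZ
  exact hxZ
end

section
/- Let Φ be an admissible family of Borel probability measures on [0,1], i.e., every ν ∈ Φ and every weak limit of sequences from Φ has empty integral periodic zero set. Then Φ is equi-positive: there exists ε₀ > 0 such that for all x ∈ [0,1] and all ν ∈ Φ, there exists k_{x,ν} ∈ ℤ with |ν̂(x + k_{x,ν})| ≥ ε₀. -/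
open MeasureTheory Filter Topology

set_option maxHeartbeats 1000000

open Set

lemma ft_arg (ξ y : ℝ) :
    (-(2 * (Real.pi : ℂ) * Complex.I) * (ξ : ℂ) * (y : ℂ))
      = ((-(2 * Real.pi * ξ * y) : ℝ) : ℂ) * Complex.I := by
  push_cast; ring

lemma ft_cont (ξ : ℝ) : Continuous fun y : ℝ =>
    Complex.exp (-(2 * (Real.pi : ℂ) * Complex.I) * (ξ : ℂ) * (y : ℂ)) := by
  fun_prop

lemma ft_norm (ξ y : ℝ) :
    ‖Complex.exp (-(2 * (Real.pi : ℂ) * Complex.I) * (ξ : ℂ) * (y : ℂ))‖ = 1 := by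
  rw [ft_arg, Complex.norm_exp_ofReal_mul_I]

lemma ft_integrable (μ : Measure ℝ) [IsFiniteMeasure μ] (ξ : ℝ) :
    Integrable (fun y : ℝ =>
      Complex.exp (-(2 * (Real.pi : ℂ) * Complex.I) * (ξ : ℂ) * (y : ℂ))) μ := by
  refine Integrable.mono' (integrable_const 1) (ft_cont ξ).aestronglyMeasurable ?_
  filter_upwards with y
  rw [ft_norm]

/-- weak convergence implies convergence of Fourier transforms at each point -/
lemma tendsto_FT_of_weakLim (s : ℕ → Measure ℝ) (ν₀ : Measure ℝ)
    (hs : ∀ n, IsProbabilityMeasure (s n)) (h0 : IsProbabilityMeasure ν₀)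
    (hw : ∀ f : BoundedContinuousFunction ℝ ℝ,
      Tendsto (fun n => ∫ x, f x ∂(s n)) atTop (𝓝 (∫ x, f x ∂ν₀))) (ξ : ℝ) :
    Tendsto (fun n => FT (s n) ξ) atTop (𝓝 (FT ν₀ ξ)) := by
  set E : ℝ → ℂ := fun y => Complex.exp (-(2 * (Real.pi : ℂ) * Complex.I) * (ξ : ℂ) * (y : ℂ)) with hE
  have hcont : Continuous E := ft_cont ξ
  have hre : Continuous fun y => (E y).re := Complex.continuous_re.comp hcont
  have him : Continuous fun y => (E y).im := Complex.continuous_im.comp hcont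
  have hbre : ∀ y, ‖(E y).re‖ ≤ 1 := fun y => by
    calc ‖(E y).re‖ ≤ ‖E y‖ := Complex.abs_re_le_norm _
    _ = 1 := ft_norm ξ y
  have hbim : ∀ y, ‖(E y).im‖ ≤ 1 := fun y => by
    calc ‖(E y).im‖ ≤ ‖E y‖ := Complex.abs_im_le_norm _
    _ = 1 := ft_norm ξ y
  set fre := BoundedContinuousFunction.ofNormedAddCommGroup _ hre 1 hbre
  set fim := BoundedContinuousFunction.ofNormedAddCommGroup _ him 1 hbim
  have hdecomp : ∀ (μ : Measure ℝ), IsProbabilityMeasure μ →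
      FT μ ξ = ((∫ y, (E y).re ∂μ : ℝ) : ℂ) + ((∫ y, (E y).im ∂μ : ℝ) : ℂ) * Complex.I := by
    intro μ hμ
    have : FT μ ξ = ∫ y, E y ∂μ := rfl
    rw [this, ← integral_coe_re_add_coe_im (ft_integrable μ ξ)]
    simp only [RCLike.re_to_complex, RCLike.im_to_complex, RCLike.I_to_complex, integral_ofReal]
    rfl
  have h1 := hw fre
  have h2 := hw fim
  have hfre : ∀ (μ : Measure ℝ), (∫ x, fre x ∂μ) = ∫ y, (E y).re ∂μ := fun μ => rfl
  rw [hdecomp ν₀ h0]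
  have : ∀ n, FT (s n) ξ = ((∫ y, (E y).re ∂(s n) : ℝ) : ℂ)
      + ((∫ y, (E y).im ∂(s n) : ℝ) : ℂ) * Complex.I := fun n => hdecomp _ (hs n)
  simp only [this]
  exact ((Complex.continuous_ofReal.tendsto _).comp h1).add
    (((Complex.continuous_ofReal.tendsto _).comp h2).mul_const Complex.I)

lemma ft_lip (ν : Measure ℝ) (hp : IsProbabilityMeasure ν)
    (hs : ν (Set.Icc (0 : ℝ) 1)ᶜ = 0) (a b : ℝ) (hab : 2 * Real.pi * |a - b| ≤ 1) :
    ‖FT ν a - FT ν b‖ ≤ 4 * Real.pi * |a - b| := by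
  have hmem : ∀ᵐ y ∂ν, y ∈ Set.Icc (0 : ℝ) 1 := by
    rw [MeasureTheory.ae_iff]
    exact hs
  have hsub : FT ν a - FT ν b = ∫ y,
      (Complex.exp (-(2 * (Real.pi : ℂ) * Complex.I) * (a : ℂ) * (y : ℂ))
        - Complex.exp (-(2 * (Real.pi : ℂ) * Complex.I) * (b : ℂ) * (y : ℂ))) ∂ν :=
    (integral_sub (ft_integrable ν a) (ft_integrable ν b)).symm
  rw [hsub]
  have hbound : ∀ᵐ (y : ℝ) ∂ν, ‖Complex.exp (-(2 * (Real.pi : ℂ) * Complex.I) * (a : ℂ) * (y : ℂ))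
        - Complex.exp (-(2 * (Real.pi : ℂ) * Complex.I) * (b : ℂ) * (y : ℂ))‖
      ≤ 4 * Real.pi * |a - b| := by
    filter_upwards [hmem] with y hy
    set θa := -(2 * Real.pi * a * y) with hθa
    set θb := -(2 * Real.pi * b * y) with hθb
    rw [ft_arg, ft_arg]
    have key : (θa : ℂ) * Complex.I = (θb : ℂ) * Complex.I + ((θa - θb : ℝ) : ℂ) * Complex.I := by
      push_cast; ring
    rw [key, Complex.exp_add]
    have : Complex.exp ((θb : ℂ) * Complex.I) * Complex.exp (((θa - θb : ℝ) : ℂ) * Complex.I)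
        - Complex.exp ((θb : ℂ) * Complex.I)
        = Complex.exp ((θb : ℂ) * Complex.I) * (Complex.exp (((θa - θb : ℝ) : ℂ) * Complex.I) - 1) := by
      ring
    rw [this, norm_mul, Complex.norm_exp_ofReal_mul_I, one_mul]
    have hθ : |θa - θb| ≤ 2 * Real.pi * |a - b| := by
      have : θa - θb = -(2 * Real.pi * (a - b) * y) := by rw [hθa, hθb]; ring
      rw [this, abs_neg, abs_mul, abs_mul, abs_mul, abs_two,
        abs_of_nonneg Real.pi_nonneg]
      have hy1 : |y| ≤ 1 := abs_le.mpr ⟨by linarith [hy.1], hy.2⟩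
      have h2 : (0:ℝ) ≤ 2 * Real.pi * |a - b| := by positivity
      nlinarith [h2, abs_nonneg y]
    have hz : ‖(((θa - θb : ℝ) : ℂ) * Complex.I)‖ = |θa - θb| := by
      rw [norm_mul, Complex.norm_I, mul_one, Complex.norm_real, Real.norm_eq_abs]
    have hle1 : ‖(((θa - θb : ℝ) : ℂ) * Complex.I)‖ ≤ 1 := by
      rw [hz]; exact hθ.trans hab
    calc ‖Complex.exp (((θa - θb : ℝ) : ℂ) * Complex.I) - 1‖
        = ‖Complex.exp (((θa - θb : ℝ) : ℂ) * Complex.I) - 1‖ := rfl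
      _ ≤ 2 * ‖(((θa - θb : ℝ) : ℂ) * Complex.I)‖ := Complex.norm_exp_sub_one_le hle1
      _ = 2 * |θa - θb| := by rw [hz]
      _ ≤ 2 * (2 * Real.pi * |a - b|) := by linarith
      _ = 4 * Real.pi * |a - b| := by ring
  calc ‖∫ y, (Complex.exp (-(2 * (Real.pi : ℂ) * Complex.I) * (a : ℂ) * (y : ℂ))
        - Complex.exp (-(2 * (Real.pi : ℂ) * Complex.I) * (b : ℂ) * (y : ℂ))) ∂ν‖
      ≤ 4 * Real.pi * |a - b| * (ν Set.univ).toReal :=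
        norm_integral_le_of_norm_le_const hbound
    _ = 4 * Real.pi * |a - b| := by simp [hp.measure_univ]

lemma measure_Iic_eq_one (ν : Measure ℝ) (hp : IsProbabilityMeasure ν)
    (hs : ν (Set.Icc (0 : ℝ) 1)ᶜ = 0) {q : ℝ} (hq : 1 ≤ q) : ν (Iic q) = 1 := by
  have h1 : ν (Iic q)ᶜ = 0 := by
    refine measure_mono_null ?_ hs
    intro y hy
    simp only [mem_compl_iff, mem_Iic, not_le] at hy ⊢
    intro hmem
    exact absurd (hmem.2.trans hq) (not_le.mpr hy)
  have h2 : (1 : ENNReal) = ν univ := hp.measure_univ.symm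
  refine le_antisymm prob_le_one ?_
  calc (1 : ENNReal) = ν univ := h2
    _ ≤ ν (Iic q) + ν (Iic q)ᶜ := by
        rw [← Set.union_compl_self (Iic q)]; exact measure_union_le _ _
    _ = ν (Iic q) := by rw [h1, add_zero]

lemma measure_Iic_eq_zero (ν : Measure ℝ) (hs : ν (Set.Icc (0 : ℝ) 1)ᶜ = 0)
    {q : ℝ} (hq : q < 0) : ν (Iic q) = 0 := by
  refine measure_mono_null ?_ hs
  intro y hy
  simp only [mem_Iic] at hy
  simp only [mem_compl_iff, mem_Icc, not_and, not_le]
  intro h0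
  linarith

lemma helly (ν : ℕ → Measure ℝ) (hprob : ∀ n, IsProbabilityMeasure (ν n))
    (hsupp : ∀ n, ν n (Set.Icc (0 : ℝ) 1)ᶜ = 0) :
    ∃ (φ : ℕ → ℕ) (ν₀ : Measure ℝ), StrictMono φ ∧ IsProbabilityMeasure ν₀ ∧
      ν₀ (Set.Icc (0 : ℝ) 1)ᶜ = 0 ∧ WeakLim (fun n => ν (φ n)) ν₀ := by
  classical
  -- CDF values at rationals, as elements of Icc 0 1
  set u : ℕ → ℚ → (Set.Icc (0:ℝ) 1) := fun n q =>
    ⟨(ν n (Iic (q : ℝ))).toReal,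
      ⟨ENNReal.toReal_nonneg, by
        have h1 : ν n (Iic (q:ℝ)) ≤ 1 := prob_le_one
        have := ENNReal.toReal_mono ENNReal.one_ne_top h1
        simpa using this⟩⟩ with hu
  -- sequential compactness of ℚ → Icc 0 1
  obtain ⟨L, -, φ, hφ, hconv⟩ := (isCompact_univ (X := ℚ → (Set.Icc (0:ℝ) 1))).tendsto_subseq
    (fun n => Set.mem_univ (u n))
  rw [tendsto_pi_nhds] at hconv
  set g : ℚ → ℝ := fun q => (L q : ℝ) with hg
  have hgconv : ∀ q : ℚ, Tendsto (fun n => (ν (φ n) (Iic (q:ℝ))).toReal) atTop (𝓝 (g q)) := by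
    intro q
    exact ((continuous_subtype_val.tendsto _).comp (hconv q))
  have hg01 : ∀ q, 0 ≤ g q ∧ g q ≤ 1 := fun q => ⟨(L q).2.1, (L q).2.2⟩
  have hgmono : Monotone g := by
    intro q r hqr
    refine le_of_tendsto_of_tendsto' (hgconv q) (hgconv r) fun n => ?_
    exact ENNReal.toReal_mono (measure_ne_top _ _) (measure_mono (Iic_subset_Iic.mpr (by exact_mod_cast hqr)))
  have hg0 : ∀ q : ℚ, q < 0 → g q = 0 := by
    intro q hq
    refine tendsto_nhds_unique (hgconv q) ?_
    have : ∀ n, (ν (φ n) (Iic (q:ℝ))).toReal = 0 := fun n => by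
      rw [measure_Iic_eq_zero _ (hsupp _) (by exact_mod_cast hq)]; simp
    simp only [this]; exact tendsto_const_nhds
  have hg1 : ∀ q : ℚ, 1 ≤ q → g q = 1 := by
    intro q hq
    refine tendsto_nhds_unique (hgconv q) ?_
    have : ∀ n, (ν (φ n) (Iic (q:ℝ))).toReal = 1 := fun n => by
      rw [measure_Iic_eq_one _ (hprob _) (hsupp _) (by exact_mod_cast hq)]; simp
    simp only [this]; exact tendsto_const_nhds
  -- right-continuous regularization on rationals
  have hne : ∀ q : ℚ, Nonempty (Set.Ioi q) := fun q => Set.nonempty_Ioi.to_subtype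
  have hbdd : ∀ q : ℚ, BddBelow (Set.range fun r : Set.Ioi q => g r) := by
    intro q
    refine ⟨0, ?_⟩
    rintro y ⟨r, rfl⟩
    exact (hg01 _).1
  set g' : ℚ → ℝ := fun q => ⨅ r : Set.Ioi q, g r with hg'
  have hg'le : ∀ {q r : ℚ}, q < r → g' q ≤ g r := by
    intro q r hqr
    exact ciInf_le_of_le (hbdd q) ⟨r, hqr⟩ le_rfl
  have hgle' : ∀ q : ℚ, g q ≤ g' q := by
    intro q
    haveI := hne q
    exact le_ciInf fun r => hgmono (le_of_lt r.2)
  have hg'mono : Monotone g' := by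
    intro q r hqr
    haveI := hne r
    refine le_ciInf fun s => ?_
    exact ciInf_le_of_le (hbdd q) ⟨s, lt_of_le_of_lt hqr s.2⟩ le_rfl
  have hg'01 : ∀ q, 0 ≤ g' q ∧ g' q ≤ 1 := by
    intro q
    constructor
    · haveI := hne q
      exact le_ciInf fun r => (hg01 _).1
    · exact (hg'le (lt_add_one q)).trans (hg01 _).2
  have hg'0 : ∀ q : ℚ, q < 0 → g' q = 0 := by
    intro q hq
    obtain ⟨r, hr1, hr2⟩ := exists_between hq
    refine le_antisymm ?_ (hg'01 q).1
    rw [← hg0 r hr2]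
    exact hg'le hr1
  have hg'1 : ∀ q : ℚ, 1 ≤ q → g' q = 1 := by
    intro q hq
    refine le_antisymm (hg'01 q).2 ?_
    rw [← hg1 q hq]
    exact hgle' q
  have hratCDF : ProbabilityTheory.IsMeasurableRatCDF (fun _ : Unit => g') := by
    constructor
    · intro a
      constructor
      · exact hg'mono
      · refine Tendsto.congr' ?_ (tendsto_const_nhds : Tendsto (fun _ : ℚ => (1:ℝ)) atTop _)
        filter_upwards [eventually_ge_atTop (1 : ℚ)] with q hq
        exact (hg'1 q hq).symm
      · refine Tendsto.congr' ?_ (tendsto_const_nhds : Tendsto (fun _ : ℚ => (0:ℝ)) atBot _)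
        filter_upwards [eventually_le_atBot (-1 : ℚ)] with q hq
        exact (hg'0 q (lt_of_le_of_lt hq (by norm_num))).symm
      · intro t
        refine le_antisymm ?_ ?_
        · -- ⨅ r : Ioi t, g' r ≤ g' t = ⨅ s : Ioi t, g s
          haveI := hne t
          refine le_ciInf fun s => ?_
          obtain ⟨r, hr1, hr2⟩ := exists_between (Set.mem_Ioi.mp s.2)
          calc (⨅ r : Set.Ioi t, g' r) ≤ g' r := ciInf_le_of_le ⟨0, by rintro y ⟨w, rfl⟩; exact (hg'01 _).1⟩ ⟨r, hr1⟩ le_rfl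
            _ ≤ g s := hg'le hr2
        · haveI := hne t
          exact le_ciInf fun r => hg'mono (le_of_lt r.2)
    · exact measurable_const
  set F := hratCDF.stieltjesFunction () with hF
  set ν₀ := F.measure with hν₀
  haveI hFprob : IsProbabilityMeasure ν₀ :=
    ProbabilityTheory.IsMeasurableRatCDF.instIsProbabilityMeasure_stieltjesFunction hratCDF ()
  have hFrat : ∀ q : ℚ, F q = g' q := fun q => hratCDF.stieltjesFunction_eq () q
  have hFg1 : ∀ (q : ℚ) (t : ℝ), (q : ℝ) ≤ t → g q ≤ F t := by
    intro q t hqt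
    calc g q ≤ g' q := hgle' q
      _ = F q := (hFrat q).symm
      _ ≤ F t := F.mono hqt
  have hFg2 : ∀ (t : ℝ) (r : ℚ), t < (r : ℝ) → F t ≤ g r := by
    intro t r htr
    obtain ⟨q', hq1, hq2⟩ := exists_rat_btwn htr
    calc F t ≤ F q' := F.mono (le_of_lt hq1)
      _ = g' q' := hFrat q'
      _ ≤ g r := hg'le (by exact_mod_cast hq2)
  have hF0 : ∀ t : ℝ, t < 0 → F t = 0 := by
    intro t ht
    obtain ⟨r, hr1, hr2⟩ := exists_rat_btwn ht
    refine le_antisymm ?_ (hratCDF.stieltjesFunction_nonneg () t)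
    rw [← hg0 r (by exact_mod_cast hr2)]
    exact hFg2 t r hr1
  have hF1 : ∀ t : ℝ, 1 ≤ t → F t = 1 := by
    intro t ht
    refine le_antisymm (hratCDF.stieltjesFunction_le_one () t) ?_
    rw [← hg1 1 le_rfl]
    exact hFg1 1 t (by exact_mod_cast ht)
  have hIic : ∀ t : ℝ, ν₀ (Iic t) = ENNReal.ofReal (F t) :=
    fun t => hratCDF.measure_stieltjesFunction_Iic () t
  have hsupp0 : ν₀ (Set.Icc (0 : ℝ) 1)ᶜ = 0 := by
    have hIio : ν₀ (Iio 0) = 0 := by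
      have hsub : Iio (0:ℝ) ⊆ ⋃ n : ℕ, Iic (-(1:ℝ)/(n+1)) := by
        intro y hy
        simp only [mem_Iio] at hy
        obtain ⟨n, hn⟩ := exists_nat_gt (1 / (-y))
        refine Set.mem_iUnion.mpr ⟨n, ?_⟩
        simp only [mem_Iic]
        have hy' : (0:ℝ) < -y := by linarith
        refine (le_div_iff₀ (by positivity : (0:ℝ) < (n:ℝ)+1)).mpr ?_
        have h2 : 1 < (n:ℝ) * (-y) := (div_lt_iff₀ hy').mp hn
        nlinarith
      refine measure_mono_null hsub ?_
      refine measure_iUnion_null fun n => ?_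
      rw [hIic, hF0 _ (div_neg_of_neg_of_pos (by norm_num) (by positivity)), ENNReal.ofReal_zero]
    have hIoi : ν₀ (Ioi 1) = 0 := by
      have : ν₀ (Iic 1)ᶜ = 0 := by
        rw [measure_compl measurableSet_Iic (measure_ne_top _ _), hIic, hF1 1 le_rfl,
          hFprob.measure_univ]
        simp
      simpa using this
    refine measure_mono_null ?_ (le_antisymm ((measure_union_le _ _).trans (by rw [hIio, hIoi]; simp)) (by positivity) : ν₀ (Iio 0 ∪ Ioi 1) = 0)
    intro y hy
    simp only [mem_compl_iff, mem_Icc, not_and, not_le] at hy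
    rcases le_or_gt 0 y with h0 | h0
    · exact Or.inr (hy h0)
    · exact Or.inl h0
  -- CDF convergence at continuity points of F
  have hconvF : ∀ t : ℝ, ContinuousAt F t →
      Tendsto (fun n => (ν (φ n) (Iic t)).toReal) atTop (𝓝 (F t)) := by
    intro t hct
    rw [Metric.tendsto_atTop]
    intro ε hε
    obtain ⟨δ, hδpos, hδ⟩ := Metric.continuousAt_iff.mp hct (ε/2) (by linarith)
    obtain ⟨q, hq1, hq2⟩ := exists_rat_btwn (show t - δ/2 < t by linarith)
    obtain ⟨r, hr1, hr2⟩ := exists_rat_btwn (show t < t + δ/2 by linarith)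
    have hd1 : dist (t - δ/2) t < δ := by
      rw [Real.dist_eq]
      rw [show t - δ/2 - t = -(δ/2) by ring, abs_neg, abs_of_nonneg (by linarith)]
      linarith
    have hd2 : dist (t + δ/2) t < δ := by
      rw [Real.dist_eq]
      rw [show t + δ/2 - t = δ/2 by ring, abs_of_nonneg (by linarith)]
      linarith
    have he1 := hδ hd1
    have he2 := hδ hd2
    rw [Real.dist_eq, abs_sub_lt_iff] at he1 he2
    have hFq : F t - ε/2 < g q := by
      have h2 : F (t - δ/2) ≤ g q := hFg2 _ q hq1
      linarith [he1.2]
    have hFr : g r < F t + ε/2 := by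
      have h2 : g r ≤ F (t + δ/2) := hFg1 r _ (le_of_lt hr2)
      linarith [he2.1]
    have h1 := (hgconv q).eventually_const_lt hFq
    have h2 := (hgconv r).eventually_lt_const hFr
    obtain ⟨N, hN⟩ := eventually_atTop.mp (h1.and h2)
    refine ⟨N, fun n hn => ?_⟩
    obtain ⟨hna, hnb⟩ := hN n hn
    have hm1 : (ν (φ n) (Iic (q:ℝ))).toReal ≤ (ν (φ n) (Iic t)).toReal :=
      ENNReal.toReal_mono (measure_ne_top _ _) (measure_mono (Iic_subset_Iic.mpr (le_of_lt hq2)))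
    have hm2 : (ν (φ n) (Iic t)).toReal ≤ (ν (φ n) (Iic (r:ℝ))).toReal :=
      ENNReal.toReal_mono (measure_ne_top _ _) (measure_mono (Iic_subset_Iic.mpr (le_of_lt hr1)))
    rw [Real.dist_eq, abs_sub_lt_iff]
    constructor <;> linarith
  -- weak convergence
  refine ⟨φ, ν₀, hφ, hFprob, hsupp0, ?_⟩
  intro f
  rw [Metric.tendsto_atTop]
  intro ε hε
  have hε' : (0:ℝ) < ε/5 := by linarith
  have huc := (isCompact_Icc (a := (-1:ℝ)) (b := 2)).uniformContinuousOn_of_continuous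
    f.continuous.continuousOn
  rw [Metric.uniformContinuousOn_iff] at huc
  obtain ⟨δ, hδpos, hδ⟩ := huc (ε/5) hε'
  set h0 : ℝ := min δ 1 / 2 with hh0
  have hh0pos : 0 < h0 := by
    rw [hh0]
    have : 0 < min δ 1 := lt_min hδpos one_pos
    linarith
  have h2h : 2 * h0 ≤ δ := by
    rw [hh0]
    have : min δ 1 ≤ δ := min_le_left _ _
    linarith
  have hh0le : h0 ≤ 1/2 := by
    rw [hh0]
    have : min δ 1 ≤ 1 := min_le_right _ _
    linarith
  set m : ℕ := ⌈1/h0⌉₊ + 1 with hm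
  have hD : {x : ℝ | ¬ContinuousAt F x}.Countable := F.mono.countable_not_continuousAt
  have hchoice : ∀ j : ℕ, ∃ s : ℝ, s ∈ Ioo ((j:ℝ)*h0 - h0) ((j:ℝ)*h0) ∧ ContinuousAt F s := by
    intro j
    by_contra hcon
    push_neg at hcon
    have hsub : Ioo ((j:ℝ)*h0 - h0) ((j:ℝ)*h0) ⊆ {x | ¬ContinuousAt F x} := fun s hs => hcon s hs
    have h0vol := measure_mono_null hsub (hD.measure_zero volume)
    rw [Real.volume_Ioo] at h0vol
    have : (j:ℝ)*h0 - ((j:ℝ)*h0 - h0) = h0 := by ring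
    rw [this] at h0vol
    exact absurd h0vol (by simp [ENNReal.ofReal_eq_zero, not_le, hh0pos])
  choose t ht1 ht2 using hchoice
  have htmono : StrictMono t := by
    refine strictMono_nat_of_lt_succ fun j => ?_
    have h1 := (ht1 j).2
    have h2 := (ht1 (j+1)).1
    push_cast at h2
    linarith
  have ht0 : t 0 < 0 := by
    have := (ht1 0).2
    simpa using this
  have htm : 1 < t m := by
    have hlow := (ht1 m).1
    have hceil : (1:ℝ)/h0 ≤ (⌈1/h0⌉₊ : ℝ) := Nat.le_ceil _
    have hmr : (m:ℝ) = (⌈1/h0⌉₊ : ℝ) + 1 := by rw [hm]; push_cast; ring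
    have h1 : (1/h0)*h0 = 1 := by field_simp
    nlinarith
  have htK : ∀ j, j ≤ m → t j ∈ Icc (-1:ℝ) 2 := by
    intro j hj
    have hl := (ht1 j).1
    have hr := (ht1 j).2
    have hj0 : (0:ℝ) ≤ (j:ℝ)*h0 := by positivity
    constructor
    · have : h0 ≤ 1 := by linarith
      linarith
    · have hjm : (j:ℝ) ≤ (m:ℝ) := by exact_mod_cast hj
      have hceil2 : (⌈1/h0⌉₊:ℝ) < 1/h0 + 1 := Nat.ceil_lt_add_one (by positivity)
      have hmr : (m:ℝ) = (⌈1/h0⌉₊ : ℝ) + 1 := by rw [hm]; push_cast; ring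
      have h1 : (1/h0)*h0 = 1 := by field_simp
      nlinarith
  have hdisj : ∀ i j : ℕ, i ≠ j →
      Disjoint (Ioc (t i) (t (i+1))) (Ioc (t j) (t (j+1))) := by
    have key : ∀ i j : ℕ, i < j → Disjoint (Ioc (t i) (t (i+1))) (Ioc (t j) (t (j+1))) := by
      intro i j hij
      rw [Set.Ioc_disjoint_Ioc]
      calc min (t (i+1)) (t (j+1)) ≤ t (i+1) := min_le_left _ _
        _ ≤ t j := htmono.monotone hij
        _ ≤ max (t i) (t j) := le_max_right _ _
    intro i j hij
    rcases lt_or_gt_of_ne hij with h | h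
    · exact key i j h
    · exact (key j i h).symm
  have hunion : ∀ k : ℕ, (⋃ j ∈ Finset.range k, Ioc (t j) (t (j+1))) = Ioc (t 0) (t k) := by
    intro k
    induction k with
    | zero => simp
    | succ k ih =>
        rw [Finset.range_add_one, Finset.set_biUnion_insert, ih, Set.union_comm,
          Set.Ioc_union_Ioc_eq_Ioc (htmono.monotone (Nat.zero_le k)) (le_of_lt (htmono (Nat.lt_succ_self k)))]
  set S : Measure ℝ → ℝ := fun μ => ∑ j ∈ Finset.range m,
    f (t (j+1)) * (μ (Ioc (t j) (t (j+1)))).toReal with hS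
  have claimA : ∀ μ : Measure ℝ, IsProbabilityMeasure μ → μ (Set.Icc (0:ℝ) 1)ᶜ = 0 →
      |∫ x, f x ∂μ - S μ| ≤ ε/5 := by
    intro μ hμp hμs
    haveI := hμp
    have hae : ∀ᵐ x ∂μ, x ∈ Icc (0:ℝ) 1 := by
      rw [MeasureTheory.ae_iff]; exact hμs
    have haemem : ∀ᵐ x ∂μ, x ∈ Ioc (t 0) (t m) :=
      hae.mono fun x hx => ⟨lt_of_lt_of_le ht0 hx.1, hx.2.trans (le_of_lt htm)⟩
    have hres : μ.restrict (Ioc (t 0) (t m)) = μ := Measure.restrict_eq_self_of_ae_mem haemem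
    have hint : Integrable f μ := f.integrable μ
    have hsplit : ∫ x, f x ∂μ = ∑ j ∈ Finset.range m, ∫ x in Ioc (t j) (t (j+1)), f x ∂μ := by
      conv_lhs => rw [← hres]
      rw [show (Ioc (t 0) (t m)) = ⋃ j ∈ Finset.range m, Ioc (t j) (t (j+1)) from (hunion m).symm]
      exact integral_biUnion_finset (Finset.range m) (fun j _ => measurableSet_Ioc)
        (fun i _ j _ hij => hdisj i j hij) (fun j _ => hint.integrableOn)
    have hterm : ∀ j ∈ Finset.range m,
        |∫ x in Ioc (t j) (t (j+1)), f x ∂μ - f (t (j+1)) * (μ (Ioc (t j) (t (j+1)))).toReal|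
          ≤ (ε/5) * (μ (Ioc (t j) (t (j+1)))).toReal := by
      intro j hj
      rw [Finset.mem_range] at hj
      set I := Ioc (t j) (t (j+1)) with hI
      set s := I ∩ Icc (0:ℝ) 1 with hsdef
      have hseq : I =ᵐ[μ] s := by
        rw [MeasureTheory.ae_eq_set]
        constructor
        · refine measure_mono_null ?_ hμs
          intro x hx
          simp only [hsdef, Set.mem_diff, Set.mem_inter_iff, not_and] at hx
          exact hx.2 hx.1
        · refine measure_mono_null ?_ (measure_empty (μ := μ))
          intro x hx
          exact absurd hx.1.1 hx.2
      have hμeq : μ I = μ s := measure_congr hseq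
      have hbound : ∀ x ∈ s, ‖f x - f (t (j+1))‖ ≤ ε/5 := by
        intro x hx
        obtain ⟨hxI, hx01⟩ := hx
        have hxK : x ∈ Icc (-1:ℝ) 2 := ⟨by linarith [hx01.1], by linarith [hx01.2]⟩
        have htjK : t (j+1) ∈ Icc (-1:ℝ) 2 := htK (j+1) hj
        have hdxt : dist x (t (j+1)) < δ := by
          rw [Real.dist_eq, abs_sub_lt_iff]
          have hlj := (ht1 j).1
          have hrj := (ht1 (j+1)).2
          have hlj1 := (ht1 (j+1)).1
          push_cast at hlj hrj hlj1
          have hx1 : t j < x := hxI.1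
          have hx2 : x ≤ t (j+1) := hxI.2
          constructor <;> nlinarith [(ht1 j).2]
        have := hδ x hxK (t (j+1)) htjK hdxt
        rw [Real.dist_eq] at this
        rw [Real.norm_eq_abs]
        exact le_of_lt this
      have heq2 : ∫ x in I, f x ∂μ - f (t (j+1)) * (μ I).toReal
          = ∫ x in s, (f x - f (t (j+1))) ∂μ := by
        rw [setIntegral_congr_set hseq, hμeq]
        rw [integral_sub hint.integrableOn (integrableOn_const (measure_lt_top _ _).ne)]
        rw [setIntegral_const]
        simp [smul_eq_mul, mul_comm, Measure.real]
      rw [heq2]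
      have hnorm := norm_setIntegral_le_of_norm_le_const (μ := μ) (s := s)
        (C := ε/5) (measure_lt_top _ _) hbound
      rw [Real.norm_eq_abs] at hnorm
      calc |∫ x in s, (f x - f (t (j+1))) ∂μ| ≤ (ε/5) * (μ s).toReal := hnorm
        _ = (ε/5) * (μ I).toReal := by rw [hμeq]
    have hsumle : ∑ j ∈ Finset.range m, (μ (Ioc (t j) (t (j+1)))).toReal ≤ 1 := by
      have h1 : ∑ j ∈ Finset.range m, μ (Ioc (t j) (t (j+1)))
          = μ (⋃ j ∈ Finset.range m, Ioc (t j) (t (j+1))) :=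
        (measure_biUnion_finset (fun i _ j _ hij => hdisj i j hij)
          (fun j _ => measurableSet_Ioc)).symm
      have h2 : (∑ j ∈ Finset.range m, μ (Ioc (t j) (t (j+1)))) ≤ 1 := by
        rw [h1]; exact prob_le_one
      calc ∑ j ∈ Finset.range m, (μ (Ioc (t j) (t (j+1)))).toReal
          = (∑ j ∈ Finset.range m, μ (Ioc (t j) (t (j+1)))).toReal :=
            (ENNReal.toReal_sum (fun _ _ => measure_ne_top _ _)).symm
        _ ≤ (1 : ENNReal).toReal := ENNReal.toReal_mono ENNReal.one_ne_top h2
        _ = 1 := by simp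
    calc |∫ x, f x ∂μ - S μ|
        = |∑ j ∈ Finset.range m, (∫ x in Ioc (t j) (t (j+1)), f x ∂μ
            - f (t (j+1)) * (μ (Ioc (t j) (t (j+1)))).toReal)| := by
          rw [hsplit, hS, Finset.sum_sub_distrib]
      _ ≤ ∑ j ∈ Finset.range m, |∫ x in Ioc (t j) (t (j+1)), f x ∂μ
            - f (t (j+1)) * (μ (Ioc (t j) (t (j+1)))).toReal| := Finset.abs_sum_le_sum_abs _ _
      _ ≤ ∑ j ∈ Finset.range m, (ε/5) * (μ (Ioc (t j) (t (j+1)))).toReal :=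
          Finset.sum_le_sum hterm
      _ = (ε/5) * ∑ j ∈ Finset.range m, (μ (Ioc (t j) (t (j+1)))).toReal := by
          rw [Finset.mul_sum]
      _ ≤ (ε/5) * 1 := by
          refine mul_le_mul_of_nonneg_left hsumle (le_of_lt hε')
      _ = ε/5 := by ring
  have claimB : Tendsto (fun n => S (ν (φ n))) atTop (𝓝 (S ν₀)) := by
    refine tendsto_finset_sum _ (fun j hj => ?_)
    have hab : t j ≤ t (j+1) := le_of_lt (htmono (Nat.lt_succ_self j))
    have hν₀Ioc : (ν₀ (Ioc (t j) (t (j+1)))).toReal = F (t (j+1)) - F (t j) := by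
      rw [hν₀, StieltjesFunction.measure_Ioc, ENNReal.toReal_ofReal (sub_nonneg.mpr (F.mono hab))]
    rw [hν₀Ioc]
    refine Tendsto.const_mul _ ?_
    have hj1 := hconvF (t j) (ht2 j)
    have hj2 := hconvF (t (j+1)) (ht2 (j+1))
    refine (hj2.sub hj1).congr fun n => ?_
    have hsplitIic : ν (φ n) (Iic (t (j+1))) = ν (φ n) (Iic (t j)) + ν (φ n) (Ioc (t j) (t (j+1))) := by
      rw [← measure_union (Set.Iic_disjoint_Ioc le_rfl) measurableSet_Ioc, Set.Iic_union_Ioc_eq_Iic hab]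
    rw [hsplitIic, ENNReal.toReal_add (measure_ne_top _ _) (measure_ne_top _ _)]
    ring
  obtain ⟨N, hN⟩ := (Metric.tendsto_atTop.mp claimB) (ε/5) hε'
  refine ⟨N, fun n hn => ?_⟩
  have h1 := claimA (ν (φ n)) (hprob _) (hsupp _)
  have h2 := claimA ν₀ hFprob hsupp0
  have h3 := hN n hn
  rw [Real.dist_eq] at h3 ⊢
  have htri : |(∫ x, f x ∂ν (φ n)) - ∫ x, f x ∂ν₀|
      ≤ |(∫ x, f x ∂ν (φ n)) - S (ν (φ n))| + |S (ν (φ n)) - S ν₀| + |S ν₀ - ∫ x, f x ∂ν₀| := by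
    have ha := abs_sub_le (∫ x, f x ∂ν (φ n)) (S (ν (φ n))) (S ν₀)
    have hb := abs_sub_le (∫ x, f x ∂ν (φ n)) (S ν₀) (∫ x, f x ∂ν₀)
    linarith
  have h2' : |S ν₀ - ∫ x, f x ∂ν₀| = |(∫ x, f x ∂ν₀) - S ν₀| := abs_sub_comm _ _
  rw [h2'] at htri
  linarith


/-- An admissible family of probability measures on `[0,1]` (all members and all weak
limits of its sequences have empty integral periodic zero set) is equi-positive:
there is `ε₀ > 0` such that for all `x ∈ [0,1]` and all `ν ∈ Φ` there is `k ∈ ℤ` with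
`|ν̂(x+k)| ≥ ε₀`. -/
theorem stmt5 (Φ : Set (Measure ℝ))
    (hprob : ∀ ν ∈ Φ, IsProbabilityMeasure ν)
    (hsupp : ∀ ν ∈ Φ, ν (Set.Icc (0 : ℝ) 1)ᶜ = 0)
    (hZ : ∀ ν ∈ Φ, Zset ν = ∅)
    (hZlim : ∀ ν₀ : Measure ℝ, IsProbabilityMeasure ν₀ →
      (∃ s : ℕ → Measure ℝ, (∀ n, s n ∈ Φ) ∧ WeakLim s ν₀) → Zset ν₀ = ∅) :
    ∃ ε₀ > (0 : ℝ), ∀ x ∈ Set.Icc (0 : ℝ) 1, ∀ ν ∈ Φ,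
      ∃ k : ℤ, ε₀ ≤ ‖FT ν (x + (k : ℝ))‖ := by
  by_contra hcon
  push_neg at hcon
  have H : ∀ n : ℕ, ∃ x ∈ Set.Icc (0:ℝ) 1, ∃ μ ∈ Φ,
      ∀ k : ℤ, ‖FT μ (x + (k:ℝ))‖ < 1/((n:ℝ)+1) := by
    intro n
    obtain ⟨x, hx, μ, hμ, hk⟩ := hcon (1/((n:ℝ)+1)) (by positivity)
    exact ⟨x, hx, μ, hμ, hk⟩
  choose x hx μ hμ hk using H
  obtain ⟨x₀, hx₀, φ₁, hφ₁, hxconv⟩ := isCompact_Icc.tendsto_subseq hx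
  obtain ⟨φ₂, ν₀, hφ₂, hν₀p, hν₀s, hwl⟩ := helly (fun n => μ (φ₁ n))
    (fun n => hprob _ (hμ _)) (fun n => hsupp _ (hμ _))
  set ψ : ℕ → ℕ := φ₁ ∘ φ₂ with hψdef
  have hψ : StrictMono ψ := hφ₁.comp hφ₂
  have hwl' : WeakLim (fun n => μ (ψ n)) ν₀ := hwl
  have hZ0 : Zset ν₀ = ∅ := hZlim ν₀ hν₀p ⟨fun n => μ (ψ n), fun n => hμ _, hwl'⟩
  have hxc : Tendsto (fun n => x (ψ n)) atTop (𝓝 x₀) := by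
    have := hxconv.comp hφ₂.tendsto_atTop
    exact this
  have hx₀mem : x₀ ∈ Zset ν₀ := by
    intro k
    have h1 : Tendsto (fun n => FT (μ (ψ n)) (x₀ + (k:ℝ))) atTop (𝓝 (FT ν₀ (x₀ + (k:ℝ)))) :=
      tendsto_FT_of_weakLim _ _ (fun n => hprob _ (hμ _)) hν₀p hwl' _
    have h2 : Tendsto (fun n => FT (μ (ψ n)) (x₀ + (k:ℝ))) atTop (𝓝 0) := by
      have hπpos : (0:ℝ) < Real.pi := Real.pi_pos
      refine squeeze_zero_norm' (a := fun n : ℕ => 1/((n:ℝ)+1) + 4 * Real.pi * dist (x (ψ n)) x₀) ?_ ?_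
      · have hev : ∀ᶠ n in atTop, dist (x (ψ n)) x₀ < 1/(4 * Real.pi) :=
          (Metric.tendsto_nhds.mp hxc) (1/(4 * Real.pi)) (by positivity)
        filter_upwards [hev] with n hn
        have habs : |(x₀ + (k:ℝ)) - (x (ψ n) + (k:ℝ))| = dist (x (ψ n)) x₀ := by
          rw [dist_comm, Real.dist_eq]
          congr 1
          ring
        have hab : 2 * Real.pi * |(x₀ + (k:ℝ)) - (x (ψ n) + (k:ℝ))| ≤ 1 := by
          rw [habs]
          have h4 : dist (x (ψ n)) x₀ ≤ 1/(4 * Real.pi) := le_of_lt hn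
          have : 2 * Real.pi * dist (x (ψ n)) x₀ ≤ 2 * Real.pi * (1/(4 * Real.pi)) :=
            mul_le_mul_of_nonneg_left h4 (by positivity)
          have heq : 2 * Real.pi * (1/(4 * Real.pi)) = 1/2 := by field_simp; ring
          linarith
        have hlip := ft_lip (μ (ψ n)) (hprob _ (hμ _)) (hsupp _ (hμ _))
          (x₀ + (k:ℝ)) (x (ψ n) + (k:ℝ)) hab
        have hsm : ‖FT (μ (ψ n)) (x (ψ n) + (k:ℝ))‖ < 1/((ψ n : ℝ)+1) := hk (ψ n) k
        have hψn : 1/((ψ n : ℝ)+1) ≤ 1/((n:ℝ)+1) := by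
          apply one_div_le_one_div_of_le (by positivity)
          have := hψ.le_apply (x := n)
          push_cast
          exact_mod_cast by linarith [this]
        calc ‖FT (μ (ψ n)) (x₀ + (k:ℝ))‖
            = ‖FT (μ (ψ n)) (x (ψ n) + (k:ℝ))
              + (FT (μ (ψ n)) (x₀ + (k:ℝ)) - FT (μ (ψ n)) (x (ψ n) + (k:ℝ)))‖ := by
              congr 1; ring
          _ ≤ ‖FT (μ (ψ n)) (x (ψ n) + (k:ℝ))‖
              + ‖FT (μ (ψ n)) (x₀ + (k:ℝ)) - FT (μ (ψ n)) (x (ψ n) + (k:ℝ))‖ := norm_add_le _ _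
          _ ≤ 1/((n:ℝ)+1) + 4 * Real.pi * |(x₀ + (k:ℝ)) - (x (ψ n) + (k:ℝ))| := by
              exact add_le_add (le_trans (le_of_lt hsm) hψn) hlip
          _ = 1/((n:ℝ)+1) + 4 * Real.pi * dist (x (ψ n)) x₀ := by rw [habs]
      · have hA : Tendsto (fun n : ℕ => 1/((n:ℝ)+1)) atTop (𝓝 0) :=
          tendsto_one_div_add_atTop_nhds_zero_nat
        have hB : Tendsto (fun n => dist (x (ψ n)) x₀) atTop (𝓝 0) :=
          tendsto_iff_dist_tendsto_zero.mp hxc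
        have := hA.add (hB.const_mul (4 * Real.pi))
        simpa using this
    exact tendsto_nhds_unique h1 h2
  rw [hZ0] at hx₀mem
  exact hx₀mem
end

section
/- Let μ be a complex Borel measure on the circle T = ℝ/ℤ. Then the sum over all atoms τ of μ of |μ({τ})|² equals lim_{N→∞} (1/(2N+1)) ∑_{k=−N}^{N} |μ̂(k)|², where μ̂(k) = ∫ e^{−2πikx} dμ(x). -/
open MeasureTheory Filter Topology

open Complex

noncomputable def Kd (N : ℕ) (t : ℝ) : ℂ :=
  ((1 / (2 * (N:ℝ) + 1) : ℝ) : ℂ) *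
    ∑ k ∈ Finset.Icc (-(N:ℤ)) (N:ℤ),
      Complex.exp (-(2 * (Real.pi : ℂ) * Complex.I) * (k : ℂ) * (t : ℂ))

lemma exp_term (k : ℤ) (t : ℝ) :
    Complex.exp (-(2 * (Real.pi : ℂ) * Complex.I) * (k : ℂ) * (t : ℂ)) =
      Complex.exp (-(2 * (Real.pi : ℂ) * Complex.I) * (t : ℂ)) ^ k := by
  rw [show (-(2 * (Real.pi : ℂ) * Complex.I) * (k : ℂ) * (t : ℂ)) =
      (k : ℂ) * (-(2 * (Real.pi : ℂ) * Complex.I) * (t : ℂ)) by ring, Complex.exp_int_mul]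

lemma r_norm (t : ℝ) : ‖Complex.exp (-(2 * (Real.pi : ℂ) * Complex.I) * (t : ℂ))‖ = 1 := by
  rw [Complex.norm_exp]
  norm_num [Complex.mul_re, Complex.mul_im]

lemma term_norm (k : ℤ) (t : ℝ) :
    ‖Complex.exp (-(2 * (Real.pi : ℂ) * Complex.I) * (k : ℂ) * (t : ℂ))‖ = 1 := by
  rw [exp_term, norm_zpow, r_norm, one_zpow]

lemma Kd_norm_le (N : ℕ) (t : ℝ) : ‖Kd N t‖ ≤ 1 := by
  rw [Kd, norm_mul]
  have h1 : ‖∑ k ∈ Finset.Icc (-(N:ℤ)) (N:ℤ),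
      Complex.exp (-(2 * (Real.pi : ℂ) * Complex.I) * (k : ℂ) * (t : ℂ))‖ ≤ 2 * (N:ℝ) + 1 := by
    refine (norm_sum_le _ _).trans ?_
    simp only [term_norm, Finset.sum_const, nsmul_eq_mul, mul_one]
    rw [Int.card_Icc, show ((N:ℤ) + 1 - -N).toNat = 2 * N + 1 by omega]
    push_cast; linarith
  rw [Complex.norm_real, Real.norm_eq_abs, abs_of_pos (by positivity)]
  calc 1 / (2 * (N:ℝ) + 1) * ‖_‖ ≤ 1 / (2 * (N:ℝ) + 1) * (2 * (N:ℝ) + 1) := by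
        apply mul_le_mul_of_nonneg_left h1 (by positivity)
    _ = 1 := by field_simp

lemma integrable_conj' {X} [MeasurableSpace X] {μ : Measure X} {f : X → ℂ}
    (h : Integrable f μ) : Integrable (fun x => (starRingEnd ℂ) (f x)) μ :=
  h.norm.mono' (Complex.continuous_conj.comp_aestronglyMeasurable h.aestronglyMeasurable)
    (Filter.Eventually.of_forall fun x => by rw [RCLike.norm_conj])

lemma r_eq_one_iff (t : ℝ) :
    Complex.exp (-(2 * (Real.pi : ℂ) * Complex.I) * (t : ℂ)) = 1 ↔ ∃ m : ℤ, t = (m : ℝ) := by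
  rw [Complex.exp_eq_one_iff]
  constructor
  · rintro ⟨n, hn⟩
    refine ⟨-n, ?_⟩
    have h2 : (-(t:ℂ)) * (2 * (Real.pi : ℂ) * Complex.I) = (n:ℂ) * (2 * (Real.pi : ℂ) * Complex.I) := by
      rw [← hn]; ring
    have h3 : (-(t:ℂ)) = (n:ℂ) := mul_right_cancel₀ Complex.two_pi_I_ne_zero h2
    have h4 : -t = (n : ℝ) := by exact_mod_cast congrArg Complex.re h3
    push_cast; linarith
  · rintro ⟨m, rfl⟩
    exact ⟨-m, by push_cast; ring⟩

lemma sum_reindex (N : ℕ) (g : ℤ → ℂ) :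
    ∑ k ∈ Finset.Icc (-(N:ℤ)) (N:ℤ), g k
      = ∑ j ∈ Finset.range (2*N+1), g ((j:ℤ) - N) := by
  have h : Finset.Icc (-(N:ℤ)) (N:ℤ)
      = Finset.map ⟨fun j : ℕ => (j:ℤ) - N, fun a b hab => by simp only [sub_left_inj, Nat.cast_inj] at hab; exact hab⟩ (Finset.range (2*N+1)) := by
    ext k
    simp only [Finset.mem_Icc, Finset.mem_map, Finset.mem_range, Function.Embedding.coeFn_mk]
    constructor
    · rintro ⟨h1, h2⟩; exact ⟨(k + N).toNat, by omega, by show ((k + N).toNat : ℤ) - N = k; omega⟩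
    · rintro ⟨a, ha, rfl⟩; show -(N:ℤ) ≤ (a:ℤ) - N ∧ (a:ℤ) - N ≤ N; omega
  rw [h, Finset.sum_map]; rfl

open scoped Classical in
noncomputable def chi (t : ℝ) : ℂ := if ∃ m : ℤ, t = (m:ℝ) then 1 else 0

open scoped Classical in
lemma chi_pos {t : ℝ} (h : ∃ m : ℤ, t = (m:ℝ)) : chi t = 1 := if_pos h

open scoped Classical in
lemma chi_neg {t : ℝ} (h : ¬ ∃ m : ℤ, t = (m:ℝ)) : chi t = 0 := if_neg h

open scoped Classical in
lemma Kd_tendsto (t : ℝ) :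
    Tendsto (fun N => Kd N t) atTop (𝓝 (chi t)) := by
  by_cases h : ∃ m : ℤ, t = (m : ℝ)
  · rw [chi_pos h]
    have hone : ∀ N : ℕ, Kd N t = 1 := by
      intro N
      rw [Kd]
      have : ∀ k ∈ Finset.Icc (-(N:ℤ)) (N:ℤ),
          Complex.exp (-(2 * (Real.pi : ℂ) * Complex.I) * (k : ℂ) * (t : ℂ)) = 1 := by
        intro k _
        rw [exp_term, (r_eq_one_iff t).2 h, one_zpow]
      rw [Finset.sum_congr rfl this, Finset.sum_const, Int.card_Icc,
        show ((N:ℤ) + 1 - -N).toNat = 2 * N + 1 by omega]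
      have h2 : (2 * (N:ℝ) + 1) ≠ 0 := by positivity
      push_cast
      field_simp
      rw [nsmul_eq_mul, mul_one]; push_cast; exact div_self (a := (2 * (N:ℂ) + 1)) (by exact_mod_cast h2)
    simp only [hone]; exact tendsto_const_nhds
  · rw [chi_neg h]
    set r := Complex.exp (-(2 * (Real.pi : ℂ) * Complex.I) * (t : ℂ)) with hr
    have hr1 : r ≠ 1 := fun hc => h ((r_eq_one_iff t).1 hc)
    have hr0 : r ≠ 0 := Complex.exp_ne_zero _
    have hnr : ‖r‖ = 1 := by
      rw [hr, Complex.norm_exp]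
      norm_num [Complex.mul_re, Complex.mul_im]
    have hbound : ∀ N : ℕ, ‖Kd N t‖ ≤ (2 / ‖r - 1‖) / (2 * (N:ℝ) + 1) := by
      intro N
      rw [Kd, norm_mul]
      have hsum : ∑ k ∈ Finset.Icc (-(N:ℤ)) (N:ℤ),
          Complex.exp (-(2 * (Real.pi : ℂ) * Complex.I) * (k : ℂ) * (t : ℂ))
          = (∑ j ∈ Finset.range (2*N+1), r ^ j) / r ^ N := by
        have h1 : ∀ k : ℤ,
            Complex.exp (-(2 * (Real.pi : ℂ) * Complex.I) * (k : ℂ) * (t : ℂ)) = r ^ k := by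
          intro k; rw [exp_term, hr]
        simp only [h1]
        rw [sum_reindex N (fun k => r ^ k), Finset.sum_div]
        refine Finset.sum_congr rfl fun j _ => ?_
        rw [zpow_sub₀ hr0, zpow_natCast, zpow_natCast]
      rw [hsum, norm_div, norm_pow, hnr, one_pow, div_one]
      have hg : ‖∑ j ∈ Finset.range (2*N+1), r ^ j‖ ≤ 2 / ‖r - 1‖ := by
        rw [geom_sum_eq hr1, norm_div]
        gcongr
        calc ‖r ^ (2*N+1) - 1‖ ≤ ‖r ^ (2*N+1)‖ + ‖(1:ℂ)‖ := norm_sub_le _ _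
          _ = 2 := by rw [norm_pow, hnr, one_pow, norm_one]; norm_num
      rw [Complex.norm_real, Real.norm_eq_abs, abs_of_pos (by positivity)]
      calc 1 / (2 * (N:ℝ) + 1) * ‖∑ j ∈ Finset.range (2*N+1), r ^ j‖
          ≤ 1 / (2 * (N:ℝ) + 1) * (2 / ‖r - 1‖) :=
            mul_le_mul_of_nonneg_left hg (by positivity)
        _ = (2 / ‖r - 1‖) / (2 * (N:ℝ) + 1) := by ring
    have hN : Tendsto (fun N : ℕ => 2 * (N:ℝ) + 1) atTop atTop :=
      tendsto_atTop_add_const_right _ _ (tendsto_natCast_atTop_atTop.const_mul_atTop two_pos)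
    exact squeeze_zero_norm hbound (tendsto_const_nhds.div_atTop hN)


/-- Wiener's theorem on the circle (identified with `[0,1)`): for a complex measure
`f dμ` on the circle (with `μ` a finite positive measure supported in `[0,1)` and
`f ∈ L¹(μ)`), the sum of the squared moduli of its atoms equals the Cesàro limit
`lim_N (1/(2N+1)) ∑_{|k| ≤ N} |(f dμ)^(k)|²`, where
`(f dμ)^(k) = ∫ e^{-2πikx} f(x) dμ(x)`. -/
theorem stmt7 (μ : Measure ℝ) [IsFiniteMeasure μ]
    (hsupp : μ (Set.Ico (0 : ℝ) 1)ᶜ = 0)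
    (f : ℝ → ℂ) (hf : Integrable f μ) :
    Tendsto
      (fun N : ℕ => (1 / (2 * (N : ℝ) + 1)) *
        ∑ k ∈ Finset.Icc (-(N : ℤ)) (N : ℤ),
          ‖∫ x, Complex.exp (-(2 * (Real.pi : ℂ) * Complex.I) * (k : ℂ) * (x : ℂ)) * f x ∂μ‖ ^ 2)
      atTop
      (𝓝 (∑' τ : ℝ, ‖∫ x in {τ}, f x ∂μ‖ ^ 2)) := by
    classical
  set F : ℝ → ℂ := fun τ => ∫ x in {τ}, f x ∂μ with hF
  set e : ℤ → ℝ → ℂ :=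
    fun k x => Complex.exp (-(2 * (Real.pi : ℂ) * Complex.I) * (k : ℂ) * (x : ℂ)) with he
  set c : ℤ → ℂ := fun k => ∫ x, e k x * f x ∂μ with hc
  have hπ : ∀ k : ℤ, Continuous (e k) :=
    fun k => Complex.continuous_exp.comp (continuous_const.mul Complex.continuous_ofReal)
  have hek : ∀ k : ℤ, Integrable (fun x => e k x * f x) μ :=
    fun k => hf.bdd_mul (hπ k).aestronglyMeasurable (c := 1) (Filter.Eventually.of_forall fun x => (term_norm k x).le)
  have hbound_int : Integrable (fun z : ℝ × ℝ => ‖f z.1‖ * ‖f z.2‖) (μ.prod μ) :=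
    hf.norm.mul_prod hf.norm
  have hffbar : Integrable (fun z : ℝ × ℝ => f z.1 * (starRingEnd ℂ) (f z.2)) (μ.prod μ) :=
    hf.mul_prod (integrable_conj' hf)
  set θ : ℕ → ℂ := fun N =>
    ∫ z : ℝ × ℝ, Kd N (z.1 - z.2) * (f z.1 * (starRingEnd ℂ) (f z.2)) ∂(μ.prod μ) with hθ
  -- Step A : the kernel integral equals the Cesàro average of |c k|²
  have hxy : ∀ (k : ℤ) (x y : ℝ),
      Complex.exp (-(2 * (Real.pi : ℂ) * Complex.I) * (k : ℂ) * ((x - y : ℝ) : ℂ))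
        = e k x * (starRingEnd ℂ) (e k y) := by
    intro k x y
    rw [he]
    simp only
    rw [← Complex.exp_conj]
    have hconj : (starRingEnd ℂ) (-(2 * (Real.pi : ℂ) * Complex.I) * (k : ℂ) * (y : ℂ))
        = (2 * (Real.pi : ℂ) * Complex.I) * (k : ℂ) * (y : ℂ) := by
      simp only [map_mul, map_neg, Complex.conj_I, Complex.conj_ofReal, map_intCast,
        map_ofNat]
      ring
    rw [hconj, ← Complex.exp_add]
    congr 1
    push_cast
    ring
  have hA : ∀ N : ℕ, θ N = ((1 / (2 * (N:ℝ) + 1) : ℝ) : ℂ) *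
      ∑ k ∈ Finset.Icc (-(N:ℤ)) (N:ℤ), c k * (starRingEnd ℂ) (c k) := by
    intro N
    have hker : ∀ z : ℝ × ℝ, Kd N (z.1 - z.2) * (f z.1 * (starRingEnd ℂ) (f z.2))
        = ((1 / (2 * (N:ℝ) + 1) : ℝ) : ℂ) * ∑ k ∈ Finset.Icc (-(N:ℤ)) (N:ℤ),
            (e k z.1 * f z.1) * (starRingEnd ℂ) (e k z.2 * f z.2) := by
      intro z
      rw [Kd, mul_assoc, Finset.sum_mul]
      congr 1
      refine Finset.sum_congr rfl fun k _ => ?_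
      rw [hxy k z.1 z.2, map_mul]
      ring
    calc θ N = ∫ z : ℝ × ℝ, ((1 / (2 * (N:ℝ) + 1) : ℝ) : ℂ) *
          ∑ k ∈ Finset.Icc (-(N:ℤ)) (N:ℤ),
            (e k z.1 * f z.1) * (starRingEnd ℂ) (e k z.2 * f z.2) ∂(μ.prod μ) := by
          rw [hθ]; exact integral_congr_ae (.of_forall fun z => hker z)
      _ = ((1 / (2 * (N:ℝ) + 1) : ℝ) : ℂ) * ∑ k ∈ Finset.Icc (-(N:ℤ)) (N:ℤ),
            ∫ z : ℝ × ℝ, (e k z.1 * f z.1) * (starRingEnd ℂ) (e k z.2 * f z.2) ∂(μ.prod μ) := by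
          rw [integral_const_mul, integral_finset_sum _
            (fun k _ => ((hek k).mul_prod (integrable_conj' (hek k))))]
      _ = _ := by
          congr 1
          refine Finset.sum_congr rfl fun k _ => ?_
          rw [integral_prod_mul (fun x => e k x * f x)
            (fun y => (starRingEnd ℂ) (e k y * f y)), integral_conj]
  have hre : ∀ N : ℕ, (1 / (2 * (N : ℝ) + 1)) *
      ∑ k ∈ Finset.Icc (-(N : ℤ)) (N : ℤ), ‖c k‖ ^ 2 = (θ N).re := by
    intro N
    rw [hA N, Complex.re_ofReal_mul, Complex.re_sum]
    congr 1
    refine Finset.sum_congr rfl fun k _ => ?_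
    rw [Complex.mul_conj, Complex.ofReal_re, Complex.normSq_eq_norm_sq]
  -- Step B : dominated convergence
  have hKcont : ∀ N : ℕ, Continuous (Kd N) := by
    intro N
    unfold Kd
    exact continuous_const.mul (continuous_finset_sum _ fun k _ =>
      Complex.continuous_exp.comp (continuous_const.mul Complex.continuous_ofReal))
  have hmeasK : ∀ N : ℕ, AEStronglyMeasurable
      (fun z : ℝ × ℝ => Kd N (z.1 - z.2) * (f z.1 * (starRingEnd ℂ) (f z.2))) (μ.prod μ) :=
    fun N => (((hKcont N).comp (continuous_fst.sub continuous_snd)).aestronglyMeasurable).mul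
      hffbar.aestronglyMeasurable
  have hbd : ∀ N : ℕ, ∀ᵐ z : ℝ × ℝ ∂(μ.prod μ),
      ‖Kd N (z.1 - z.2) * (f z.1 * (starRingEnd ℂ) (f z.2))‖ ≤ ‖f z.1‖ * ‖f z.2‖ := by
    intro N
    refine Filter.Eventually.of_forall fun z => ?_
    rw [norm_mul, norm_mul, RCLike.norm_conj]
    calc ‖Kd N (z.1 - z.2)‖ * (‖f z.1‖ * ‖f z.2‖) ≤ 1 * (‖f z.1‖ * ‖f z.2‖) := by
          apply mul_le_mul_of_nonneg_right (Kd_norm_le N _) (by positivity)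
      _ = ‖f z.1‖ * ‖f z.2‖ := one_mul _
  have hpt : ∀ᵐ z : ℝ × ℝ ∂(μ.prod μ),
      Tendsto (fun N : ℕ => Kd N (z.1 - z.2) * (f z.1 * (starRingEnd ℂ) (f z.2))) atTop
        (𝓝 (chi (z.1 - z.2) * (f z.1 * (starRingEnd ℂ) (f z.2)))) :=
    Filter.Eventually.of_forall fun z => (Kd_tendsto (z.1 - z.2)).mul_const _
  have hB : Tendsto θ atTop
      (𝓝 (∫ z : ℝ × ℝ, chi (z.1 - z.2) * (f z.1 * (starRingEnd ℂ) (f z.2)) ∂(μ.prod μ))) :=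
    tendsto_integral_of_dominated_convergence _ hmeasK hbound_int hbd hpt
  -- a.e. both coordinates lie in [0,1)
  have haeP : ∀ᵐ z : ℝ × ℝ ∂(μ.prod μ),
      z.1 ∈ Set.Ico (0:ℝ) 1 ∧ z.2 ∈ Set.Ico (0:ℝ) 1 := by
    have h1 : ∀ᵐ z : ℝ × ℝ ∂(μ.prod μ), z.1 ∈ Set.Ico (0:ℝ) 1 := by
      rw [ae_iff]
      have he1 : {z : ℝ × ℝ | ¬ z.1 ∈ Set.Ico (0:ℝ) 1}
          = (Set.Ico (0:ℝ) 1)ᶜ ×ˢ (Set.univ : Set ℝ) := by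
        ext z; simp
      rw [he1, Measure.prod_prod, hsupp, zero_mul]
    have h2 : ∀ᵐ z : ℝ × ℝ ∂(μ.prod μ), z.2 ∈ Set.Ico (0:ℝ) 1 := by
      rw [ae_iff]
      have he2 : {z : ℝ × ℝ | ¬ z.2 ∈ Set.Ico (0:ℝ) 1}
          = (Set.univ : Set ℝ) ×ˢ (Set.Ico (0:ℝ) 1)ᶜ := by
        ext z; simp
      rw [he2, Measure.prod_prod, hsupp, mul_zero]
    exact h1.and h2
  -- on that a.e. set the kernel limit is the diagonal indicator
  have hcongr : ∫ z : ℝ × ℝ, chi (z.1 - z.2) * (f z.1 * (starRingEnd ℂ) (f z.2)) ∂(μ.prod μ)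
      = ∫ z : ℝ × ℝ, (if z.1 = z.2 then f z.1 * (starRingEnd ℂ) (f z.2) else 0) ∂(μ.prod μ) := by
    refine integral_congr_ae ?_
    filter_upwards [haeP] with z hz
    obtain ⟨⟨h10, h11⟩, h20, h21⟩ := hz
    by_cases hzz : z.1 = z.2
    · rw [if_pos hzz, chi_pos ⟨0, by rw [hzz]; simp⟩, one_mul]
    · rw [if_neg hzz]
      have hno : ¬ ∃ m : ℤ, z.1 - z.2 = (m : ℝ) := by
        rintro ⟨m, hm⟩
        have hmb1 : (-1 : ℤ) < m := by
          have : (-1:ℝ) < (m:ℝ) := by rw [← hm]; linarith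
          exact_mod_cast this
        have hmb2 : m < 1 := by
          have : (m:ℝ) < 1 := by rw [← hm]; linarith
          exact_mod_cast this
        have hm0 : m = 0 := by omega
        apply hzz
        have : z.1 - z.2 = 0 := by rw [hm, hm0]; norm_num
        linarith
      rw [chi_neg hno, zero_mul]
  -- Fubini: integrate over the diagonal
  have hdiagm : MeasurableSet {z : ℝ × ℝ | z.1 = z.2} :=
    measurableSet_eq_fun measurable_fst measurable_snd
  have hind : (fun z : ℝ × ℝ => if z.1 = z.2 then f z.1 * (starRingEnd ℂ) (f z.2) else 0)
      = Set.indicator {z : ℝ × ℝ | z.1 = z.2} (fun z => f z.1 * (starRingEnd ℂ) (f z.2)) := by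
    funext z
    by_cases h : z.1 = z.2 <;> simp [Set.indicator_apply, h]
  have h2meas : AEStronglyMeasurable
      (fun z : ℝ × ℝ => if z.1 = z.2 then f z.1 * (starRingEnd ℂ) (f z.2) else 0) (μ.prod μ) := by
    rw [hind]
    exact hffbar.aestronglyMeasurable.indicator hdiagm
  have h2int : Integrable
      (fun z : ℝ × ℝ => if z.1 = z.2 then f z.1 * (starRingEnd ℂ) (f z.2) else 0) (μ.prod μ) := by
    refine hbound_int.mono' h2meas (Filter.Eventually.of_forall fun z => ?_)
    by_cases h : z.1 = z.2
    · rw [if_pos h, norm_mul, RCLike.norm_conj]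
    · rw [if_neg h, norm_zero]; positivity
  have hinner : ∀ x : ℝ,
      (∫ y, (if x = y then f x * (starRingEnd ℂ) (f y) else 0) ∂μ)
        = f x * (starRingEnd ℂ) (F x) := by
    intro x
    have h1 : (∫ y, (if x = y then f x * (starRingEnd ℂ) (f y) else 0) ∂μ)
        = ∫ y in {x}, f x * (starRingEnd ℂ) (f y) ∂μ := by
      rw [← integral_indicator (measurableSet_singleton x)]
      refine integral_congr_ae (Filter.Eventually.of_forall fun y => ?_)
      by_cases h : x = y
      · simp [Set.indicator_apply, h]
      · simp [Set.indicator_apply, h, Ne.symm h]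
    rw [h1, integral_const_mul, integral_conj]
  have hC : (∫ z : ℝ × ℝ, (if z.1 = z.2 then f z.1 * (starRingEnd ℂ) (f z.2) else 0) ∂(μ.prod μ))
      = ∫ x, f x * (starRingEnd ℂ) (F x) ∂μ := by
    rw [integral_prod _ h2int]
    exact integral_congr_ae (Filter.Eventually.of_forall fun x => hinner x)
  have hint2 : Integrable (fun x => f x * (starRingEnd ℂ) (F x)) μ :=
    (h2int.integral_prod_left).congr (Filter.Eventually.of_forall fun x => hinner x)
  -- rewrite the diagonal integral as a real integral of an atom weight
  have hFx : ∀ x : ℝ, F x = (((μ {x}).toReal : ℝ) : ℂ) * f x := by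
    intro x
    rw [hF]
    simp only
    rw [integral_singleton, Complex.real_smul]; rfl
  set g : ℝ → ℝ := fun x => (μ {x}).toReal * ‖f x‖ ^ 2 with hg
  have hint_eq : ∀ x : ℝ, f x * (starRingEnd ℂ) (F x) = ((g x : ℝ) : ℂ) := by
    intro x
    rw [hFx x, map_mul, Complex.conj_ofReal,
      show f x * ((((μ {x}).toReal : ℝ) : ℂ) * (starRingEnd ℂ) (f x))
        = (((μ {x}).toReal : ℝ) : ℂ) * (f x * (starRingEnd ℂ) (f x)) from by ring,
      Complex.mul_conj, Complex.normSq_eq_norm_sq, hg]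
    push_cast
    ring
  have hgint : Integrable g μ := by
    have h1 : Integrable (fun x => ((g x : ℝ) : ℂ)) μ :=
      hint2.congr (Filter.Eventually.of_forall hint_eq)
    simpa using h1.re
  have hD1 : (∫ x, f x * (starRingEnd ℂ) (F x) ∂μ) = ((∫ x, g x ∂μ : ℝ) : ℂ) := by
    rw [show (fun x => f x * (starRingEnd ℂ) (F x)) = (fun x => ((g x : ℝ) : ℂ)) from
      funext hint_eq]
    exact integral_ofReal
  -- the atoms
  set A : Set ℝ := {x : ℝ | μ {x} ≠ 0} with hA'
  have hAc : A.Countable := by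
    refine Set.Countable.mono ?_
      (Measure.countable_meas_level_set_pos (measurable_id : Measurable (id : ℝ → ℝ)) (μ := μ))
    intro x hx
    simp only [hA', Set.mem_setOf_eq] at hx ⊢
    have hsx : {a : ℝ | id a = x} = {x} := by ext a; simp
    rw [hsx]
    exact pos_iff_ne_zero.mpr hx
  have hAm : MeasurableSet A := hAc.measurableSet
  have hval : ∫ x, g x ∂μ = ∑' τ : ℝ, ‖F τ‖ ^ 2 := by
    have h0 : ∫ x in Aᶜ, g x ∂μ = 0 := by
      refine setIntegral_eq_zero_of_forall_eq_zero fun x hx => ?_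
      have hx0 : μ {x} = 0 := not_not.mp hx
      rw [hg]
      simp [hx0]
    have hterm : ∀ x : ℝ, (μ {x}).toReal • g x = ‖F x‖ ^ 2 := by
      intro x
      rw [smul_eq_mul, hg, hFx x, norm_mul, Complex.norm_real, Real.norm_eq_abs,
        _root_.abs_of_nonneg ENNReal.toReal_nonneg, mul_pow]
      ring
    rw [← integral_add_compl hAm hgint, h0, add_zero,
      setIntegral_countable _ hAc hgint.integrableOn]
    calc ∑' (a : A), (μ {(a : ℝ)}).toReal • g a = ∑' (a : A), ‖F (a : ℝ)‖ ^ 2 :=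
          tsum_congr fun a => hterm a
      _ = ∑' τ : ℝ, ‖F τ‖ ^ 2 := by
          refine tsum_subtype_eq_of_support_subset (s := A) (f := fun τ : ℝ => ‖F τ‖ ^ 2) fun x hx => ?_
          simp only [Function.mem_support] at hx
          by_contra hxA
          have hx0 : μ {x} = 0 := not_not.mp hxA
          apply hx
          rw [hFx x, hx0]
          simp
  -- assemble
  have hlim : Tendsto θ atTop (𝓝 (((∑' τ : ℝ, ‖F τ‖ ^ 2 : ℝ)) : ℂ)) := by
    have := hB
    rw [hcongr, hC, hD1, hval] at this
    exact this
  have hlim2 : Tendsto (fun N => (θ N).re) atTop (𝓝 (∑' τ : ℝ, ‖F τ‖ ^ 2)) := by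
    have h2 := (Complex.continuous_re.tendsto _).comp hlim
    simpa [Function.comp_def] using h2
  exact Filter.Tendsto.congr (fun N => (hre N).symm) hlim2
end

section
/- Let M be a positive integer. Suppose for each n, N_n ≥ 2 is an integer and B_n ⊂ {0,1,...,N_n−1} with #B_n ≤ M. Then there exist ε₀ > 0 and δ₀ > 0 such that for every n ≥ 1, there exists an integer k with k/N_n ∈ [0,1] \ (1/2 − δ₀, 1/2 + δ₀) and |δ̂_{B_n/N_n}(1/2 + k)| ≥ ε₀. -/
open Complex Finset
noncomputable section

/-- unnormalized Fourier sum at frequency 1/2 + k -/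
def Fs (N : ℕ) (B : Finset ℕ) (k : ℕ) : ℂ :=
  ∑ b ∈ B, Complex.exp (-(2 * (Real.pi:ℂ) * I) * ((b:ℂ)/(N:ℂ)) * (1/2 + (k:ℂ)))

lemma exp_split (N : ℕ) (b k : ℕ) :
    Complex.exp (-(2*(Real.pi:ℂ)*I) * ((b:ℂ)/(N:ℂ)) * (1/2 + (k:ℂ))) =
    Complex.exp (-((Real.pi:ℂ)*I*(b:ℂ)/(N:ℂ))) *
      Complex.exp (-(2*(Real.pi:ℂ)*I) * ((b:ℂ)*(k:ℂ)/(N:ℂ))) := by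
  rw [← Complex.exp_add]
  congr 1
  ring

lemma orth (N : ℕ) (hN : 0 < N) (b b' : ℕ) (hb : b < N) (hb' : b' < N) :
    ∑ k ∈ range N, Complex.exp (2*(Real.pi:ℂ)*I * (((b:ℂ) - (b':ℂ)) * (k:ℂ) / (N:ℂ))) =
      if b = b' then (N:ℂ) else 0 := by
  have hNC : (N:ℂ) ≠ 0 := Nat.cast_ne_zero.mpr hN.ne'
  set w : ℂ := 2*(Real.pi:ℂ)*I * (((b:ℂ) - (b':ℂ)) / (N:ℂ)) with hw
  have hterm : ∀ k : ℕ, Complex.exp (2*(Real.pi:ℂ)*I * (((b:ℂ) - (b':ℂ)) * (k:ℂ) / (N:ℂ)))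
      = Complex.exp w ^ k := by
    intro k
    rw [← Complex.exp_nat_mul]
    congr 1
    rw [hw]; ring
  simp only [hterm]
  by_cases hbb : b = b'
  · subst hbb
    simp [hw]
  · rw [if_neg hbb]
    have hz1 : Complex.exp w ≠ 1 := by
      intro h
      obtain ⟨m, hm⟩ := Complex.exp_eq_one_iff.mp h
      rw [hw] at hm
      have hpi : (Real.pi:ℂ) ≠ 0 := by exact_mod_cast Real.pi_ne_zero
      have hI : (I:ℂ) ≠ 0 := I_ne_zero
      have hne : (2*(Real.pi:ℂ)*I) ≠ 0 := by
        simp [hpi, hI]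
      have h2' : (2*(Real.pi:ℂ)*I) * (((b:ℂ) - (b':ℂ)) / (N:ℂ)) = (2*(Real.pi:ℂ)*I) * (m:ℂ) := by
        rw [hm]; ring
      have h2'' := mul_left_cancel₀ hne h2'
      have h2 : ((b:ℂ) - (b':ℂ)) = (m:ℂ) * (N:ℂ) := by
        field_simp at h2''
        linear_combination h2''
      have h3 : (b:ℤ) - (b':ℤ) = m * (N:ℤ) := by exact_mod_cast h2
      have h4 : |(b:ℤ) - (b':ℤ)| < (N:ℤ) := by
        rw [abs_lt]; omega
      rw [h3, abs_mul, Int.abs_natCast] at h4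
      have hm0 : m = 0 := by
        by_contra hm0
        have : (1:ℤ) ≤ |m| := Int.one_le_abs (by omega)
        nlinarith [abs_nonneg m]
      rw [hm0] at h3
      simp at h3
      omega
    have hzN : Complex.exp w ^ N = 1 := by
      rw [← Complex.exp_nat_mul]
      have : (N:ℂ) * w = ((b:ℤ) - (b':ℤ) : ℤ) * (2 * (Real.pi:ℂ) * I) := by
        rw [hw]; push_cast; field_simp
      rw [this, Complex.exp_int_mul_two_pi_mul_I]
    rw [geom_sum_eq hz1, hzN]
    simp

lemma inv_sum (N : ℕ) (hN : 0 < N) (B : Finset ℕ) (hsub : ∀ b ∈ B, b < N)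
    (b : ℕ) (hb : b < N) :
    ∑ k ∈ range N, Fs N B k * Complex.exp (2*(Real.pi:ℂ)*I * ((b:ℂ)*(k:ℂ)/(N:ℂ)))
      = (if b ∈ B then (N:ℂ) * Complex.exp (-((Real.pi:ℂ)*I*(b:ℂ)/(N:ℂ))) else 0) := by
  unfold Fs
  simp_rw [exp_split, Finset.sum_mul]
  rw [Finset.sum_comm]
  have step : ∀ b' ∈ B,
      (∑ k ∈ range N, Complex.exp (-((Real.pi:ℂ)*I*(b':ℂ)/(N:ℂ))) *
        Complex.exp (-(2*(Real.pi:ℂ)*I) * ((b':ℂ)*(k:ℂ)/(N:ℂ))) *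
        Complex.exp (2*(Real.pi:ℂ)*I * ((b:ℂ)*(k:ℂ)/(N:ℂ))))
      = Complex.exp (-((Real.pi:ℂ)*I*(b':ℂ)/(N:ℂ))) * (if b = b' then (N:ℂ) else 0) := by
    intro b' hb'
    rw [← orth N hN b b' hb (hsub b' hb'), Finset.mul_sum]
    apply Finset.sum_congr rfl
    intro k _
    have h : Complex.exp (-(2*(Real.pi:ℂ)*I) * ((b':ℂ)*(k:ℂ)/(N:ℂ))) *
        Complex.exp (2*(Real.pi:ℂ)*I * ((b:ℂ)*(k:ℂ)/(N:ℂ)))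
        = Complex.exp (2*(Real.pi:ℂ)*I * (((b:ℂ) - (b':ℂ)) * (k:ℂ) / (N:ℂ))) := by
      rw [← Complex.exp_add]
      congr 1
      ring
    rw [mul_assoc, h]
  rw [Finset.sum_congr rfl step]
  simp only [mul_ite, mul_zero, Finset.sum_ite_eq]
  by_cases hbB : b ∈ B <;> simp [hbB, mul_comm]

lemma exists_nonzero (N : ℕ) (hN : 2 ≤ N) (B : Finset ℕ) (hne : B.Nonempty)
    (hsub : ∀ b ∈ B, b < N) :
    ∃ k, k ∈ range N ∧ 2*k ≠ N ∧ Fs N B k ≠ 0 := by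
  by_contra hcon
  push_neg at hcon
  have hN0 : 0 < N := by omega
  have hNC : (N:ℂ) ≠ 0 := Nat.cast_ne_zero.mpr hN0.ne'
  obtain ⟨b₀, hb₀⟩ := hne
  have hb₀N : b₀ < N := hsub b₀ hb₀
  rcases Nat.even_or_odd N with hEv | hOdd
  · -- N even, exceptional point k₀ = N / 2
    obtain ⟨k₀, hk₀⟩ := hEv
    have hk₀2 : 2 * k₀ = N := by omega
    have hk₀r : k₀ ∈ range N := by simp; omega
    have key : ∀ b, b < N →
        Fs N B k₀ * Complex.exp (2*(Real.pi:ℂ)*I * ((b:ℂ)*(k₀:ℂ)/(N:ℂ)))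
          = (if b ∈ B then (N:ℂ) * Complex.exp (-((Real.pi:ℂ)*I*(b:ℂ)/(N:ℂ))) else 0) := by
      intro b hb
      rw [← inv_sum N hN0 B hsub b hb]
      rw [Finset.sum_eq_single k₀]
      · intro k hk hkne
        have : Fs N B k = 0 := hcon k hk (by omega)
        rw [this, zero_mul]
      · intro h; exact absurd hk₀r h
    have hF0 : Fs N B k₀ ≠ 0 := by
      intro h0
      have := key b₀ hb₀N
      rw [h0, zero_mul, if_pos hb₀] at this
      exact (mul_ne_zero hNC (Complex.exp_ne_zero _)) this.symm
    have hall : ∀ b, b < N → b ∈ B := by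
      intro b hb
      by_contra hbB
      have := key b hb
      rw [if_neg hbB] at this
      exact (mul_ne_zero hF0 (Complex.exp_ne_zero _)) this
    have h0B : (0:ℕ) ∈ B := hall 0 (by omega)
    have h1B : (1:ℕ) ∈ B := hall 1 (by omega)
    have key0 := key 0 (by omega)
    rw [if_pos h0B] at key0
    simp only [Nat.cast_zero, zero_mul, mul_zero, zero_div, mul_zero, neg_zero,
      Complex.exp_zero, mul_one] at key0
    have key1 := key 1 (by omega)
    rw [if_pos h1B, key0] at key1
    push_cast at key1
    have hexp : Complex.exp (2*(Real.pi:ℂ)*I * ((1:ℂ)*(k₀:ℂ)/(N:ℂ)))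
        = Complex.exp (-((Real.pi:ℂ)*I*(1:ℂ)/(N:ℂ))) := by
      have := mul_left_cancel₀ hNC key1
      convert this using 2 <;> push_cast <;> ring
    obtain ⟨m, hm⟩ := Complex.exp_eq_exp_iff_exists_int.mp hexp
    have hpiI : (Real.pi:ℂ) * I ≠ 0 :=
      mul_ne_zero (by exact_mod_cast Real.pi_ne_zero) I_ne_zero
    have h1 : ((Real.pi:ℂ)*I) * (2*(k₀:ℂ)/(N:ℂ)) = ((Real.pi:ℂ)*I) * (-1/(N:ℂ) + 2*(m:ℂ)) := by
      rw [show ((Real.pi:ℂ)*I) * (2*(k₀:ℂ)/(N:ℂ)) = 2*(Real.pi:ℂ)*I * ((1:ℂ)*(k₀:ℂ)/(N:ℂ)) by ring, hm]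
      ring
    have h2 := mul_left_cancel₀ hpiI h1
    have h3 : (2*(k₀:ℂ)) = -1 + 2*((m:ℂ)*(N:ℂ)) := by
      field_simp at h2
      linear_combination h2
    have h4 : (2*(k₀:ℤ)) = -1 + 2*(m*(N:ℤ)) := by exact_mod_cast h3
    generalize hmt : m*(N:ℤ) = t at h4
    omega
  · -- N odd : F vanishes everywhere, contradiction
    have hzero : ∀ k ∈ range N, Fs N B k = 0 := by
      intro k hk
      exact hcon k hk (by rcases hOdd with ⟨j, hj⟩; omega)
    have := inv_sum N hN0 B hsub b₀ hb₀N
    rw [Finset.sum_eq_zero (fun k hk => by rw [hzero k hk, zero_mul]), if_pos hb₀] at this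
    exact (mul_ne_zero hNC (Complex.exp_ne_zero _)) this.symm

lemma conj_Fs (N : ℕ) (B : Finset ℕ) (k : ℕ) :
    (starRingEnd ℂ) (Fs N B k) =
      ∑ b ∈ B, Complex.exp ((2*(Real.pi:ℂ)*I) * ((b:ℂ)/(N:ℂ)) * (1/2 + (k:ℂ))) := by
  unfold Fs
  rw [map_sum]
  apply Finset.sum_congr rfl
  intro b _
  rw [← Complex.exp_conj]
  congr 1
  simp only [map_mul, map_neg, map_div₀, map_add, map_one, Complex.conj_I,
    Complex.conj_ofReal, map_ofNat, Complex.conj_natCast]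
  ring

lemma parseval (N : ℕ) (hN : 0 < N) (B : Finset ℕ) (hsub : ∀ b ∈ B, b < N) :
    ∑ k ∈ range N, Complex.normSq (Fs N B k) = (N:ℝ) * B.card := by
  have E : ∑ k ∈ range N, (Fs N B k * (starRingEnd ℂ) (Fs N B k)) = (N:ℂ) * B.card := by
    have hterm : ∀ k : ℕ, Fs N B k * (starRingEnd ℂ) (Fs N B k)
        = ∑ b ∈ B, ∑ b' ∈ B, Complex.exp ((Real.pi:ℂ)*I*((b':ℂ)-(b:ℂ))/(N:ℂ)) *
            Complex.exp (2*(Real.pi:ℂ)*I*(((b':ℂ)-(b:ℂ))*(k:ℂ)/(N:ℂ))) := by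
      intro k
      rw [conj_Fs]
      unfold Fs
      rw [Finset.sum_mul_sum]
      apply Finset.sum_congr rfl; intro b _
      apply Finset.sum_congr rfl; intro b' _
      rw [← Complex.exp_add, ← Complex.exp_add]
      congr 1
      ring
    simp_rw [hterm]
    rw [Finset.sum_comm]
    have hinner : ∀ b ∈ B,
        (∑ k ∈ range N, ∑ b' ∈ B, Complex.exp ((Real.pi:ℂ)*I*((b':ℂ)-(b:ℂ))/(N:ℂ)) *
            Complex.exp (2*(Real.pi:ℂ)*I*(((b':ℂ)-(b:ℂ))*(k:ℂ)/(N:ℂ)))) = (N:ℂ) := by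
      intro b hb
      rw [Finset.sum_comm]
      have h1 : ∀ b' ∈ B,
          (∑ k ∈ range N, Complex.exp ((Real.pi:ℂ)*I*((b':ℂ)-(b:ℂ))/(N:ℂ)) *
            Complex.exp (2*(Real.pi:ℂ)*I*(((b':ℂ)-(b:ℂ))*(k:ℂ)/(N:ℂ))))
          = Complex.exp ((Real.pi:ℂ)*I*((b':ℂ)-(b:ℂ))/(N:ℂ)) * (if b' = b then (N:ℂ) else 0) := by
        intro b' hb'
        rw [← Finset.mul_sum, orth N hN b' b (hsub b' hb') (hsub b hb)]
      rw [Finset.sum_congr rfl h1]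
      simp only [mul_ite, mul_zero, Finset.sum_ite_eq']
      rw [if_pos hb]
      simp
    rw [Finset.sum_congr rfl hinner]
    simp [mul_comm]
  simp_rw [Complex.mul_conj] at E
  exact_mod_cast E

lemma Fs_norm_le (N : ℕ) (B : Finset ℕ) (k : ℕ) : ‖Fs N B k‖ ≤ B.card := by
  unfold Fs
  refine le_trans (norm_sum_le _ _) ?_
  have h1 : ∀ b ∈ B, ‖Complex.exp (-(2 * (Real.pi:ℂ) * I) * ((b:ℂ)/(N:ℂ)) * (1/2 + (k:ℂ)))‖ = 1 := by
    intro b _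
    have : (-(2 * (Real.pi:ℂ) * I) * ((b:ℂ)/(N:ℂ)) * (1/2 + (k:ℂ)))
        = ((-(2 * Real.pi * ((b:ℝ)/(N:ℝ)) * (1/2 + (k:ℝ))) : ℝ) : ℂ) * I := by
      push_cast
      ring
    rw [this, Complex.norm_exp_ofReal_mul_I]
  rw [Finset.sum_congr rfl h1]
  simp

lemma Fs_normSq_le (N : ℕ) (B : Finset ℕ) (k : ℕ) :
    Complex.normSq (Fs N B k) ≤ (B.card:ℝ)^2 := by
  rw [Complex.normSq_eq_norm_sq]
  have := Fs_norm_le N B k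
  have h0 : (0:ℝ) ≤ ‖Fs N B k‖ := norm_nonneg _
  nlinarith

set_option maxHeartbeats 2000000 in
lemma large_case (M N : ℕ) (hM : 1 ≤ M) (hN8 : 8*M ≤ N) (B : Finset ℕ) (hne : B.Nonempty)
    (hsub : ∀ b ∈ B, b < N) (hcard : B.card ≤ M) :
    ∃ k ∈ range N, ¬((k:ℝ)/(N:ℝ) ∈ Set.Ioo (1/2 - (16*(M:ℝ))⁻¹) (1/2 + (16*(M:ℝ))⁻¹)) ∧
      ((B.card:ℝ)^2/(2*M)) ≤ Complex.normSq (Fs N B k) := by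
  have hN0 : 0 < N := by omega
  have hNr : (0:ℝ) < N := by exact_mod_cast hN0
  have hMr : (0:ℝ) < M := by exact_mod_cast hM
  have h1M : (1:ℝ) ≤ M := by exact_mod_cast hM
  have h8 : (8:ℝ)*M ≤ N := by exact_mod_cast hN8
  set δ : ℝ := (16*(M:ℝ))⁻¹ with hδ
  have hδpos : 0 < δ := by positivity
  set T' : Finset ℕ := Finset.Ico ⌈(N:ℝ)/2 - δ*N⌉₊ ⌈(N:ℝ)/2 + δ*N⌉₊ with hT'def
  set T : Finset ℕ := range N ∩ T' with hTdef
  set G : Finset ℕ := range N \ T' with hGdef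
  have hTcard : (T.card : ℝ) ≤ 2*δ*(N:ℝ) + 1 := by
    have h1 : T.card ≤ T'.card := Finset.card_le_card (Finset.inter_subset_right)
    rw [hT'def, Nat.card_Ico] at h1
    have hlo' := Nat.le_ceil ((N:ℝ)/2 - δ*N)
    have hhi' : (⌈(N:ℝ)/2 + δ*N⌉₊:ℝ) < (N:ℝ)/2 + δ*N + 1 :=
      Nat.ceil_lt_add_one (by positivity)
    rcases le_total ⌈(N:ℝ)/2 - δ*N⌉₊ ⌈(N:ℝ)/2 + δ*N⌉₊ with hab | hab
    · have h2 : (T.card:ℝ) ≤ ((⌈(N:ℝ)/2 + δ*N⌉₊ - ⌈(N:ℝ)/2 - δ*N⌉₊ : ℕ) : ℝ) := by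
        exact_mod_cast h1
      rw [Nat.cast_sub hab] at h2
      linarith
    · have hz2 : T.card = 0 := by omega
      rw [hz2]
      push_cast
      nlinarith
  have hT4 : (T.card : ℝ) ≤ (N:ℝ)/(4*M) := by
    have key : 2*δ*(N:ℝ) + 1 ≤ (N:ℝ)/(4*M) := by
      rw [hδ, le_div_iff₀ (by positivity : (0:ℝ) < 4*M)]
      have e1 : (16*(M:ℝ))⁻¹ * (16*M) = 1 := by field_simp
      nlinarith [e1]
    linarith
  have hTN : T.card < N := by
    have h5 : (N:ℝ)/(4*M) < N := by
      rw [div_lt_iff₀ (by positivity : (0:ℝ) < 4*M)]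
      nlinarith [mul_lt_mul_of_pos_left (show (1:ℝ) < 4*M by linarith) hNr]
    have : (T.card:ℝ) < N := lt_of_le_of_lt hT4 h5
    exact_mod_cast this
  have hcards : T.card + G.card = N := by
    rw [hTdef, hGdef, Finset.card_inter_add_card_sdiff, Finset.card_range]
  have hGne : G.Nonempty := by
    rw [← Finset.card_pos]; omega
  have hGN : G.card ≤ N := by omega
  have htot := parseval N hN0 B hsub
  have hsplit : (∑ k ∈ T, Complex.normSq (Fs N B k)) + (∑ k ∈ G, Complex.normSq (Fs N B k))
      = (N:ℝ) * B.card := by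
    rw [hTdef, hGdef, Finset.sum_inter_add_sum_sdiff, htot]
  have hTsum : (∑ k ∈ T, Complex.normSq (Fs N B k)) ≤ (T.card:ℝ) * (B.card:ℝ)^2 := by
    have := Finset.sum_le_card_nsmul T (fun k => Complex.normSq (Fs N B k)) ((B.card:ℝ)^2)
      (fun k _ => Fs_normSq_le N B k)
    simpa [nsmul_eq_mul] using this
  have hb1 : (1:ℝ) ≤ B.card := by exact_mod_cast hne.card_pos
  have hbM : (B.card:ℝ) ≤ M := by exact_mod_cast hcard
  have hGsum : (N:ℝ) * B.card - ((N:ℝ)/(4*M)) * (B.card:ℝ)^2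
      ≤ ∑ k ∈ G, Complex.normSq (Fs N B k) := by
    have : (T.card:ℝ) * (B.card:ℝ)^2 ≤ ((N:ℝ)/(4*M)) * (B.card:ℝ)^2 := by nlinarith
    linarith
  have hkey : (∑ _k ∈ G, ((B.card:ℝ)^2/(2*M))) ≤ ∑ k ∈ G, Complex.normSq (Fs N B k) := by
    rw [Finset.sum_const, nsmul_eq_mul]
    have hGr : (G.card:ℝ) ≤ N := by exact_mod_cast hGN
    have hb2 : (B.card:ℝ)^2 ≤ (B.card:ℝ)*M := by nlinarith
    have e2 : (N:ℝ)*((B.card:ℝ)^2/(2*M)) + ((N:ℝ)/(4*M))*(B.card:ℝ)^2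
        = (3*(N:ℝ)*(B.card:ℝ)^2)/(4*M) := by field_simp; ring
    have e3 : (3*(N:ℝ)*(B.card:ℝ)^2)/(4*M) ≤ (N:ℝ)*B.card := by
      rw [div_le_iff₀ (by positivity : (0:ℝ) < 4*M)]
      nlinarith [mul_le_mul_of_nonneg_left hb2 (by positivity : (0:ℝ) ≤ 3*(N:ℝ))]
    have e4 : (G.card:ℝ) * ((B.card:ℝ)^2/(2*M)) ≤ (N:ℝ) * ((B.card:ℝ)^2/(2*M)) :=
      mul_le_mul_of_nonneg_right hGr (by positivity)
    linarith
  obtain ⟨k, hkG, hk⟩ := Finset.exists_le_of_sum_le hGne hkey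
  rw [hGdef, Finset.mem_sdiff] at hkG
  obtain ⟨hkN, hkT'⟩ := hkG
  refine ⟨k, hkN, ?_, hk⟩
  rw [hT'def, Finset.mem_Ico] at hkT'
  push_neg at hkT'
  rw [Set.mem_Ioo]
  rintro ⟨hx1, hx2⟩
  have hx1' : (1/2 - δ) * (N:ℝ) < k := (lt_div_iff₀ hNr).mp hx1
  have hx2' : (k:ℝ) < (1/2 + δ) * N := (div_lt_iff₀ hNr).mp hx2
  rcases lt_or_ge k ⌈(N:ℝ)/2 - δ*N⌉₊ with hc | hc
  · have : (k:ℝ) < (N:ℝ)/2 - δ*N := Nat.lt_ceil.mp hc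
    nlinarith
  · have : ⌈(N:ℝ)/2 + δ*N⌉₊ ≤ k := hkT' hc
    have : (N:ℝ)/2 + δ*N ≤ k := le_trans (Nat.le_ceil _) (by exact_mod_cast this)
    nlinarith


open Classical in
noncomputable def val (M N : ℕ) (B : Finset ℕ) : NNReal :=
  (range N).sup (fun k =>
    if (k:ℝ)/(N:ℝ) ∈ Set.Ioo (1/2 - (16*(M:ℝ))⁻¹) (1/2 + (16*(M:ℝ))⁻¹)
    then 0 else ‖Fs N B k‖₊)

open Classical in
lemma val_pos (M N : ℕ) (hM : 1 ≤ M) (hN : 2 ≤ N) (hN8 : N < 8*M)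
    (B : Finset ℕ) (hne : B.Nonempty) (hsub : ∀ b ∈ B, b < N) :
    0 < val M N B := by
  obtain ⟨k, hkr, hk2, hkF⟩ := exists_nonzero N hN B hne hsub
  have hN0 : 0 < N := by omega
  have hNr : (0:ℝ) < N := by exact_mod_cast hN0
  have hMr : (0:ℝ) < M := by exact_mod_cast hM
  have hgood : ¬ ((k:ℝ)/(N:ℝ) ∈ Set.Ioo (1/2 - (16*(M:ℝ))⁻¹) (1/2 + (16*(M:ℝ))⁻¹)) := by
    rw [Set.mem_Ioo]
    rintro ⟨h1, h2⟩
    have h1' : (1/2 - (16*(M:ℝ))⁻¹) * (N:ℝ) < k := (lt_div_iff₀ hNr).mp h1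
    have h2' : (k:ℝ) < (1/2 + (16*(M:ℝ))⁻¹) * N := (div_lt_iff₀ hNr).mp h2
    have hδN : (16*(M:ℝ))⁻¹ * N < 1/2 := by
      rw [inv_mul_lt_iff₀ (by positivity : (0:ℝ) < 16*M)]
      have h8 : (N:ℝ) < 8*M := by exact_mod_cast hN8
      nlinarith
    have c1 : (N:ℝ) - 1 < 2*k := by nlinarith
    have c2 : (2*k:ℝ) < (N:ℝ) + 1 := by nlinarith
    have c1' : (N:ℤ) - 1 < 2*k := by exact_mod_cast c1
    have c2' : (2*k:ℤ) < (N:ℤ) + 1 := by exact_mod_cast c2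
    have : 2*k = N := by omega
    exact hk2 this
  have hle := Finset.le_sup (f := fun k : ℕ =>
    if (k:ℝ)/(N:ℝ) ∈ Set.Ioo (1/2 - (16*(M:ℝ))⁻¹) (1/2 + (16*(M:ℝ))⁻¹)
    then 0 else ‖Fs N B k‖₊) hkr
  simp only [if_neg hgood] at hle
  unfold _root_.val
  exact lt_of_lt_of_le (nnnorm_pos.mpr hkF) hle

open Classical in
lemma val_attained (M N : ℕ) (hN : 0 < N) (B : Finset ℕ) :
    ∃ k ∈ range N,
      (if (k:ℝ)/(N:ℝ) ∈ Set.Ioo (1/2 - (16*(M:ℝ))⁻¹) (1/2 + (16*(M:ℝ))⁻¹)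
        then 0 else ‖Fs N B k‖₊) = val M N B := by
  obtain ⟨k, hk, hkeq⟩ := Finset.exists_mem_eq_sup (range N) (by simp; omega) (fun k : ℕ =>
    if (k:ℝ)/(N:ℝ) ∈ Set.Ioo (1/2 - (16*(M:ℝ))⁻¹) (1/2 + (16*(M:ℝ))⁻¹)
    then 0 else ‖Fs N B k‖₊)
  exact ⟨k, hk, hkeq.symm⟩

lemma mem_good (N : ℕ) (hN0 : 0 < N) (k : ℕ) (hk : k < N) (δ : ℝ)
    (hgood : ¬((k:ℝ)/(N:ℝ) ∈ Set.Ioo (1/2 - δ) (1/2 + δ))) :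
    ((((k:ℕ):ℤ):ℝ))/(N:ℝ) ∈ Set.Icc (0:ℝ) 1 \ Set.Ioo (1/2 - δ) (1/2 + δ) := by
  have hNr : (0:ℝ) < N := by exact_mod_cast hN0
  simp only [Int.cast_natCast]
  constructor
  · rw [Set.mem_Icc]
    refine ⟨by positivity, ?_⟩
    rw [div_le_one hNr]
    exact_mod_cast hk.le
  · exact hgood

lemma norm_aux (N : ℕ) (B : Finset ℕ) (k : ℕ) :
    ‖(1 / ((B.card):ℂ)) * Fs N B k‖ = ‖Fs N B k‖ / (B.card:ℝ) := by
  rw [norm_mul, norm_div, norm_one, Complex.norm_natCast]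
  ring

/-- If `#B_n ≤ M` uniformly, with `B_n ⊆ {0,...,N_n-1}`, then there exist `ε₀, δ₀ > 0`
such that for every `n` there is an integer `k` with
`k/N_n ∈ [0,1] \ (1/2-δ₀, 1/2+δ₀)` and `|δ̂_{B_n/N_n}(1/2+k)| ≥ ε₀`. -/
theorem stmt9 (M : ℕ) (hM : 1 ≤ M) (N : ℕ → ℕ) (hN : ∀ n, 2 ≤ N n)
    (B : ℕ → Finset ℕ) (hne : ∀ n, (B n).Nonempty)
    (hsub : ∀ n, ∀ b ∈ B n, b < N n) (hcard : ∀ n, (B n).card ≤ M) :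
    ∃ ε₀ > (0 : ℝ), ∃ δ₀ > (0 : ℝ), ∀ n : ℕ, ∃ k : ℤ,
      ((k : ℝ) / (N n : ℝ) ∈ Set.Icc (0 : ℝ) 1 \ Set.Ioo (1/2 - δ₀) (1/2 + δ₀)) ∧
      ε₀ ≤ ‖(1 / ((B n).card : ℂ)) * ∑ b ∈ B n,
        Complex.exp (-(2 * (Real.pi : ℂ) * Complex.I) * ((b : ℂ) / (N n : ℂ)) * (1/2 + (k : ℂ)))‖ := by
  classical
  have hMr : (0:ℝ) < M := by exact_mod_cast hM
  set P : Finset (ℕ × Finset ℕ) := ((Finset.Ico 2 (8*M)) ×ˢ (Finset.range (8*M)).powerset).filter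
      (fun p => p.2.Nonempty ∧ ∀ b ∈ p.2, b < p.1) with hP
  have hPmem : ∀ p : ℕ × Finset ℕ, p ∈ P ↔
      (2 ≤ p.1 ∧ p.1 < 8*M ∧ p.2 ⊆ Finset.range (8*M) ∧ p.2.Nonempty ∧ ∀ b ∈ p.2, b < p.1) := by
    intro p
    rw [hP, Finset.mem_filter, Finset.mem_product, Finset.mem_Ico, Finset.mem_powerset]
    tauto
  have hPne : P.Nonempty := by
    refine ⟨(2, {0}), ?_⟩
    rw [hPmem]
    refine ⟨by omega, by omega, ?_, ⟨0, by simp⟩, ?_⟩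
    · intro b hb
      simp only [Finset.mem_singleton] at hb
      subst hb
      simp only [Finset.mem_range]
      omega
    · intro b hb
      simp only [Finset.mem_singleton] at hb
      omega
  set εS : NNReal := P.inf' hPne (fun p => val M p.1 p.2) with hεS
  have hεSpos : 0 < εS := by
    rw [hεS, Finset.lt_inf'_iff]
    intro p hp
    rw [hPmem] at hp
    exact val_pos M p.1 hM hp.1 hp.2.1 p.2 hp.2.2.2.1 hp.2.2.2.2
  have hεSr : (0:ℝ) < εS := hεSpos
  refine ⟨min ((εS:ℝ)/M) (Real.sqrt (1/(2*M))), ?_, (16*(M:ℝ))⁻¹, by positivity, ?_⟩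
  · apply lt_min (by positivity)
    exact Real.sqrt_pos.mpr (by positivity)
  intro n
  have hN0 : 0 < N n := by have := hN n; omega
  have hNr : (0:ℝ) < N n := by exact_mod_cast hN0
  have hb1 : (1:ℝ) ≤ (B n).card := by exact_mod_cast (hne n).card_pos
  have hbM : ((B n).card:ℝ) ≤ M := by exact_mod_cast hcard n
  by_cases hbig : 8*M ≤ N n
  · obtain ⟨k, hkr, hkgood, hksq⟩ := large_case M (N n) hM hbig (B n) (hne n) (hsub n) (hcard n)
    refine ⟨((k:ℕ):ℤ), mem_good (N n) hN0 k (Finset.mem_range.mp hkr) _ hkgood, ?_⟩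
    simp only [Int.cast_natCast]
    show _ ≤ ‖(1 / (((B n).card):ℂ)) * Fs (N n) (B n) k‖
    rw [norm_aux]
    have habs : ‖Fs (N n) (B n) k‖ = Real.sqrt (Complex.normSq (Fs (N n) (B n) k)) := by
      rw [Complex.norm_def]
    have h1 : Real.sqrt (((B n).card:ℝ)^2/(2*M)) ≤ ‖Fs (N n) (B n) k‖ := by
      rw [habs]
      exact Real.sqrt_le_sqrt hksq
    have h2 : Real.sqrt (((B n).card:ℝ)^2/(2*M)) = ((B n).card:ℝ) * Real.sqrt (1/(2*M)) := by
      rw [show ((B n).card:ℝ)^2/(2*M) = ((B n).card:ℝ)^2 * (1/(2*M)) by ring,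
          Real.sqrt_mul (sq_nonneg _), Real.sqrt_sq (by positivity)]
    refine le_trans (min_le_right _ _) ?_
    rw [le_div_iff₀ (by positivity : (0:ℝ) < (B n).card)]
    nlinarith [h1, h2]
  · push_neg at hbig
    have hmemP : (N n, B n) ∈ P := by
      rw [hPmem]
      exact ⟨hN n, hbig, fun b hb => Finset.mem_range.mpr (lt_trans (hsub n b hb) hbig),
        hne n, hsub n⟩
    have hvle : εS ≤ val M (N n) (B n) := Finset.inf'_le _ hmemP
    obtain ⟨k, hkr, hkeq⟩ := val_attained M (N n) hN0 (B n)
    have hkgood : ¬(((k:ℕ):ℝ)/((N n):ℝ) ∈ Set.Ioo (1/2 - (16*(M:ℝ))⁻¹) (1/2 + (16*(M:ℝ))⁻¹)) := by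
      intro hmem
      rw [if_pos hmem] at hkeq
      rw [← hkeq] at hvle
      exact absurd (lt_of_lt_of_le hεSpos hvle) (lt_irrefl 0)
    rw [if_neg hkgood] at hkeq
    have hnormge : (εS:ℝ) ≤ ‖Fs (N n) (B n) k‖ := by
      rw [← hkeq] at hvle
      exact_mod_cast hvle
    refine ⟨((k:ℕ):ℤ), mem_good (N n) hN0 k (Finset.mem_range.mp hkr) _ hkgood, ?_⟩
    simp only [Int.cast_natCast]
    show _ ≤ ‖(1 / (((B n).card):ℂ)) * Fs (N n) (B n) k‖
    rw [norm_aux]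
    refine le_trans (min_le_left _ _) ?_
    rw [div_le_div_iff₀ (by positivity) (by positivity : (0:ℝ) < (B n).card)]
    nlinarith [mul_le_mul_of_nonneg_left hbM (le_of_lt hεSr),
      mul_le_mul_of_nonneg_right hnormge (le_trans zero_le_one hb1)]
end
end

section
/- Let M ≥ 1. There exists a constant c(M) = (1/42)^{2M−1} > 0 such that for every finite set B of positive integers with #B ≤ M, max_{x ∈ [0, 1/3]} |∑_{b∈B} sin(2πbx)| ≥ c(M) · (#B). -/
lemma aux_two_mul_le_pow (M : ℕ) : 2 * M ≤ 42 ^ M := by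
  induction M with
  | zero => simp
  | succ n ih =>
    have h1 : 1 ≤ 42 ^ n := Nat.one_le_pow _ _ (by norm_num)
    calc 2 * (n + 1) = 2 * n + 2 := by ring
    _ ≤ 42 ^ n + 2 := by omega
    _ ≤ 42 ^ (n + 1) := by rw [pow_succ]; omega

/-- Sum of sine problem for sets of bounded cardinality: for every nonempty finite set
`B` of positive integers with `#B ≤ M`,
`max_{x∈[0,1/3]} |∑_{b∈B} sin(2πbx)| ≥ (1/42)^{2M-1} · #B`. -/
theorem stmt10 (M : ℕ) (hM : 1 ≤ M) (B : Finset ℕ) (hB : B.Nonempty)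
    (hpos : ∀ b ∈ B, 0 < b) (hcard : B.card ≤ M) :
    ∃ x ∈ Set.Icc (0 : ℝ) (1/3),
      ((1/42 : ℝ) ^ (2 * M - 1)) * (B.card : ℝ) ≤
        |∑ b ∈ B, Real.sin (2 * Real.pi * (b : ℝ) * x)| := by
  have hmem := B.max'_mem hB
  set m := B.max' hB with hm_def
  have hm0 : 0 < m := hpos m hmem
  have hmR : (0:ℝ) < (m:ℝ) := by exact_mod_cast hm0
  have hm1 : (1:ℝ) ≤ (m:ℝ) := by exact_mod_cast hm0
  have hpi := Real.pi_pos
  refine ⟨1/(3*(m:ℝ)), ⟨by positivity, ?_⟩, ?_⟩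
  · rw [div_le_div_iff₀ (by positivity) (by norm_num)]
    nlinarith
  · -- each term is nonnegative
    have hterm : ∀ b ∈ B, 0 ≤ Real.sin (2 * Real.pi * (b : ℝ) * (1/(3*(m:ℝ)))) := by
      intro b hb
      apply Real.sin_nonneg_of_nonneg_of_le_pi
      · positivity
      · have hbm : (b:ℝ) ≤ (m:ℝ) := by exact_mod_cast B.le_max' b hb
        rw [mul_one_div, div_le_iff₀ (by positivity)]
        nlinarith
    have hsum0 : 0 ≤ ∑ b ∈ B, Real.sin (2 * Real.pi * (b : ℝ) * (1/(3*(m:ℝ)))) :=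
      Finset.sum_nonneg hterm
    rw [abs_of_nonneg hsum0]
    have hsingle : Real.sin (2 * Real.pi * (m : ℝ) * (1/(3*(m:ℝ)))) ≤
        ∑ b ∈ B, Real.sin (2 * Real.pi * (b : ℝ) * (1/(3*(m:ℝ)))) :=
      Finset.single_le_sum hterm hmem
    have hangle : 2 * Real.pi * (m : ℝ) * (1/(3*(m:ℝ))) = Real.pi - Real.pi/3 := by
      field_simp
      ring
    rw [hangle, Real.sin_pi_sub, Real.sin_pi_div_three] at hsingle
    -- now bound the constant by √3/2
    have hsqrt : (1:ℝ) ≤ Real.sqrt 3 := by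
      rw [show (1:ℝ) = Real.sqrt 1 by simp]
      exact Real.sqrt_le_sqrt (by norm_num)
    have hnat : 2 * B.card ≤ 42 ^ (2*M - 1) := by
      calc 2 * B.card ≤ 2 * M := by omega
      _ ≤ 42 ^ M := aux_two_mul_le_pow M
      _ ≤ 42 ^ (2*M - 1) := Nat.pow_le_pow_right (by norm_num) (by omega)
    have hnatR : 2 * (B.card:ℝ) ≤ (42:ℝ) ^ (2*M - 1) := by
      have : ((2 * B.card : ℕ) : ℝ) ≤ ((42 ^ (2*M-1) : ℕ) : ℝ) := by exact_mod_cast hnat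
      push_cast at this
      linarith
    have hpow : (0:ℝ) < (42:ℝ) ^ (2*M-1) := by positivity
    have hconst : ((1/42 : ℝ) ^ (2 * M - 1)) * (B.card : ℝ) ≤ Real.sqrt 3 / 2 := by
      rw [div_pow, one_pow, div_mul_eq_mul_div, one_mul, div_le_div_iff₀ hpow (by norm_num)]
      nlinarith
    linarith
end
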